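/- arXiv:1310.6205 — 4 statements merged into one kernel-verified Lean document; each statement's English description precedes it below -/
import Mathlib

section
/- Let T be a weighted monogamous trigraph and let (X,Y) be a decomposition of T, with the block T_Y weighted as defined. Then α(T) = α(T_Y). -/
structure Trigraph (V : Type*) where
  θ : V → V → ℤ
  symm : ∀ u v, θ u v = θ v u
  range : ∀ u v, u ≠ v → θ u v = -1 ∨ θ u v = 0 ∨ θ u v = 1

namespace Trigraph

variable {V : Type*}

/-- `u` and `v` form a strong edge. -/
def SEdge (T : Trigraph V) (u v : V) : Prop := u ≠ v ∧ T.θ u v = 1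

/-- `u` and `v` form a strong antiedge. -/
def SAnti (T : Trigraph V) (u v : V) : Prop := u ≠ v ∧ T.θ u v = -1

/-- `u` and `v` form a switchable pair. -/
def Switch (T : Trigraph V) (u v : V) : Prop := u ≠ v ∧ T.θ u v = 0

/-- `u` and `v` are adjacent. -/
def Adj (T : Trigraph V) (u v : V) : Prop := u ≠ v ∧ (T.θ u v = 0 ∨ T.θ u v = 1)

/-- `u` and `v` are antiadjacent. -/
def Anti (T : Trigraph V) (u v : V) : Prop := u ≠ v ∧ (T.θ u v = -1 ∨ T.θ u v = 0)

instance [DecidableEq V] (T : Trigraph V) (u v : V) : Decidable (T.Adj u v) :=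
  inferInstanceAs (Decidable (u ≠ v ∧ (T.θ u v = 0 ∨ T.θ u v = 1)))

instance [DecidableEq V] (T : Trigraph V) (u v : V) : Decidable (T.Anti u v) :=
  inferInstanceAs (Decidable (u ≠ v ∧ (T.θ u v = -1 ∨ T.θ u v = 0)))

instance [DecidableEq V] (T : Trigraph V) (u v : V) : Decidable (T.Switch u v) :=
  inferInstanceAs (Decidable (u ≠ v ∧ T.θ u v = 0))

instance [DecidableEq V] (T : Trigraph V) (u v : V) : Decidable (T.SAnti u v) :=
  inferInstanceAs (Decidable (u ≠ v ∧ T.θ u v = -1))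

/-- A trigraph is monogamous if every vertex is in at most one switchable pair. -/
def Monogamous (T : Trigraph V) : Prop :=
  ∀ v u w : V, T.Switch v u → T.Switch v w → u = w

/-- The complement trigraph. -/
def compl (T : Trigraph V) : Trigraph V where
  θ := fun u v => -(T.θ u v)
  symm := fun u v => congrArg Neg.neg (T.symm u v)
  range := fun u v h => by
    have := T.range u v h
    try dsimp only
    omega

def IsBull (T : Trigraph V) (x1 x2 x3 y z : V) : Prop :=
  T.Adj x1 x2 ∧ T.Adj x1 x3 ∧ T.Adj x2 x3 ∧
  T.Adj y x1 ∧ T.Anti y x2 ∧ T.Anti y x3 ∧ T.Anti y z ∧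
  T.Adj z x2 ∧ T.Anti z x1 ∧ T.Anti z x3

def BullFree (T : Trigraph V) : Prop := ∀ x1 x2 x3 y z : V, ¬ T.IsBull x1 x2 x3 y z

/-- `S` is strongly complete to `A`. -/
def SComplete (T : Trigraph V) (S A : Set V) : Prop := ∀ s ∈ S, ∀ a ∈ A, T.SEdge s a

/-- `S` is strongly anticomplete to `A`. -/
def SAnticomplete (T : Trigraph V) (S A : Set V) : Prop := ∀ s ∈ S, ∀ a ∈ A, T.SAnti s a

/-- A homogeneous set. -/
def HomSet (T : Trigraph V) (X : Set V) : Prop :=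
  1 < X.ncard ∧ X.ncard < Nat.card V ∧
  ∀ v ∉ X, (∀ a ∈ X, T.SEdge v a) ∨ (∀ a ∈ X, T.SAnti v a)

/-- `(A,B,C,D,E,F)` is a split of the homogeneous pair `(A,B)`. -/
def IsSplit (T : Trigraph V) (A B C D E F : Set V) : Prop :=
  A.Nonempty ∧ B.Nonempty ∧ Disjoint A B ∧
  Disjoint C D ∧ Disjoint C E ∧ Disjoint C F ∧
  Disjoint D E ∧ Disjoint D F ∧ Disjoint E F ∧
  C ∪ D ∪ E ∪ F = (A ∪ B)ᶜ ∧
  T.SComplete A (C ∪ E) ∧ T.SAnticomplete A (D ∪ F) ∧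
  T.SComplete B (D ∪ E) ∧ T.SAnticomplete B (C ∪ F) ∧
  ¬ T.SComplete A B ∧ ¬ T.SAnticomplete A B ∧
  3 ≤ (A ∪ B).ncard ∧ 3 ≤ (C ∪ D ∪ E ∪ F).ncard

/-- `(A,B)` is a homogeneous pair. -/
def HomPair (T : Trigraph V) (A B : Set V) : Prop := ∃ C D E F, T.IsSplit A B C D E F

/-- A small homogeneous pair. -/
def SmallHomPair (T : Trigraph V) (A B : Set V) : Prop :=
  T.HomPair A B ∧ (A ∪ B).ncard ≤ 6

/-- A proper homogeneous pair. -/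
def ProperHomPair (T : Trigraph V) (A B : Set V) : Prop :=
  ∃ C D E F, T.IsSplit A B C D E F ∧ C.Nonempty ∧ D.Nonempty

/-- `(X, Xᶜ)` is a decomposition of `T`. -/
def Decomp (T : Trigraph V) (X : Set V) : Prop :=
  T.HomSet X ∨ ∃ A B, X = A ∪ B ∧ (T.SmallHomPair A B ∨ T.ProperHomPair A B)

/-- `(X, Xᶜ)` is a homogeneous cut of `T`. -/
def HomCut (T : Trigraph V) (X : Set V) : Prop :=
  T.HomSet X ∨ ∃ A B, X = A ∪ B ∧ T.ProperHomPair A B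

/-- A minimally-sided homogeneous cut. -/
def MinSidedHomCut (T : Trigraph V) (X : Set V) : Prop :=
  T.HomCut X ∧ ∀ X' : Set V, T.HomCut X' → ¬ X' ⊂ X

/-- The induced subtrigraph on `X`. -/
def induce (T : Trigraph V) (X : Set V) : Trigraph X where
  θ := fun u v => T.θ u v
  symm := fun u v => T.symm u v
  range := fun u v h => T.range u v (fun hh => h (Subtype.ext hh))

open Classical in
/-- The trigraph obtained from `T[X]` by adding two marker vertices joined by a switchable
pair, the first strongly complete to (the trace in `X` of) `P` and strongly anticomplete to
the rest of `X`, the second strongly complete to `Q` and strongly anticomplete to the rest. -/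
noncomputable def augment2 (T : Trigraph V) (X P Q : Set V) : Trigraph (↥X ⊕ Fin 2) where
  θ := fun u v =>
    match u, v with
    | Sum.inl u, Sum.inl v => T.θ u v
    | Sum.inl u, Sum.inr i => if (i = 0 ∧ (u : V) ∈ P) ∨ (i = 1 ∧ (u : V) ∈ Q) then 1 else -1
    | Sum.inr i, Sum.inl u => if (i = 0 ∧ (u : V) ∈ P) ∨ (i = 1 ∧ (u : V) ∈ Q) then 1 else -1
    | Sum.inr _, Sum.inr _ => 0
  symm := by
    rintro (u | i) (v | j)
    · exact T.symm u v
    · rfl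
    · rfl
    · rfl
  range := by
    rintro (u | i) (v | j) h
    · exact T.range u v fun hh => h (by rw [Subtype.ext hh])
    · dsimp only; split <;> simp
    · dsimp only; split <;> simp
    · simp

/-- The block of decomposition `T_X` for a proper homogeneous pair `(A,B)`:
`T[A ∪ B]` together with marker vertices `c` (strongly complete to `A`) and `d`
(strongly complete to `B`), with `cd` a switchable pair. -/
noncomputable def blockXPair (T : Trigraph V) (A B : Set V) : Trigraph (↥(A ∪ B) ⊕ Fin 2) :=
  T.augment2 (A ∪ B) A B

/-- The block of decomposition `T_Y` for a homogeneous pair `(A,B)` with split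
`(A,B,C,D,E,F)` : `T[Y]` (where `Y = (A ∪ B)ᶜ`) together with marker vertices `a`
(strongly complete to `C ∪ E`) and `b` (strongly complete to `D ∪ E`), with `ab` a
switchable pair. -/
noncomputable def blockYPair (T : Trigraph V) (A B C D E : Set V) : Trigraph (↥(A ∪ B)ᶜ ⊕ Fin 2) :=
  T.augment2 (A ∪ B)ᶜ (C ∪ E) (D ∪ E)


/-- A strong clique: vertices pairwise strongly adjacent. -/
def StrongClique (T : Trigraph V) (K : Set V) : Prop := K.Pairwise T.SEdge

/-- A strong stable set: vertices pairwise strongly antiadjacent. -/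
def StrongStable (T : Trigraph V) (K : Set V) : Prop := K.Pairwise T.SAnti

/-- `T[X]` is triangle-free. -/
def TriangleFreeOn (T : Trigraph V) (X : Set V) : Prop :=
  ∀ x ∈ X, ∀ y ∈ X, ∀ z ∈ X, ¬ (T.Adj x y ∧ T.Adj x z ∧ T.Adj y z)

/-- Membership in the basic class `𝒯₁`. -/
def InT1 (T : Trigraph V) : Prop :=
  T.Monogamous ∧ ∃ (X : Set V) (t : ℕ) (K : Fin t → Set V),
    (X ∪ ⋃ i, K i) = Set.univ ∧
    (∀ i, Disjoint X (K i)) ∧ (∀ i j, i ≠ j → Disjoint (K i) (K j)) ∧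
    T.TriangleFreeOn X ∧ (∀ i, T.StrongClique (K i)) ∧
    (∀ i j, i ≠ j → T.SAnticomplete (K i) (K j)) ∧
    (∀ i, ∀ v ∈ K i, ∃ A B : Set V,
      A ∪ B = {x ∈ X | T.Adj v x} ∧ Disjoint A B ∧
      T.StrongStable A ∧ T.StrongStable B ∧ T.SComplete A B)

/-- Membership in the basic class `𝒯₀`: monogamous trigraphs on at most 8 vertices. -/
def InT0 (T : Trigraph V) : Prop := T.Monogamous ∧ Nat.card V ≤ 8

/-- A basic trigraph: a member of `𝒯₀ ∪ 𝒯₁ ∪ 𝒯₁bar`. -/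
def Basic (T : Trigraph V) : Prop := T.InT0 ∨ T.InT1 ∨ T.compl.InT1

/-- `h` lists the vertices of a hole of length `k` in `T`. -/
def IsHole (T : Trigraph V) (k : ℕ) (h : Fin k → V) : Prop :=
  4 ≤ k ∧ Function.Injective h ∧ ∀ i j : Fin k,
    (((i.val + 1) % k = j.val ∨ (j.val + 1) % k = i.val) → T.Adj (h i) (h j)) ∧
    (i ≠ j → ¬ ((i.val + 1) % k = j.val ∨ (j.val + 1) % k = i.val) → T.Anti (h i) (h j))

def HasOddHole (T : Trigraph V) : Prop := ∃ k, Odd k ∧ ∃ h : Fin k → V, T.IsHole k h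

/-- A Berge trigraph: no odd hole and no odd antihole. -/
def Berge (T : Trigraph V) : Prop := ¬ T.HasOddHole ∧ ¬ T.compl.HasOddHole

/-- `(wv, we)` are legitimate weights for the trigraph `T`: `we` is symmetric and for every
switchable pair `uv` we have `max (wv u) (wv v) ≤ we u v ≤ wv u + wv v`. -/
def GoodWeights (T : Trigraph V) (wv : V → ℕ) (we : V → V → ℕ) : Prop :=
  (∀ u v, we u v = we v u) ∧
  ∀ u v, T.Switch u v → max (wv u) (wv v) ≤ we u v ∧ we u v ≤ wv u + wv v

/-- `S` is a stable set of `T`. -/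
def StableF (T : Trigraph V) (S : Finset V) : Prop :=
  ∀ u ∈ S, ∀ v ∈ S, u ≠ v → T.Anti u v

open Classical in
/-- The weight of a stable set `S`: the sum of the weights of the vertices of `S` that are
strongly antiadjacent to every other vertex of `S`, plus the sum of the weights of the
switchable pairs with both ends in `S`. -/
noncomputable def weightF (T : Trigraph V) (wv : V → ℕ) (we : V → V → ℕ) (S : Finset V) : ℕ :=
  (∑ v ∈ S.filter (fun v => ∀ u ∈ S, u ≠ v → T.SAnti u v), wv v)
    + (∑ u ∈ S, ∑ v ∈ S, if T.Switch u v then we u v else 0) / 2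

open Classical in
/-- The maximum weight of a stable set of `T` contained in `X`. -/
noncomputable def alphaOn [Fintype V] (T : Trigraph V) (wv : V → ℕ) (we : V → V → ℕ)
    (X : Set V) : ℕ :=
  (Finset.univ.powerset.filter fun S : Finset V => ↑S ⊆ X ∧ T.StableF S).sup (T.weightF wv we)

/-- The maximum weight of a stable set of `T`. -/
noncomputable def alphaW [Fintype V] (T : Trigraph V) (wv : V → ℕ) (we : V → V → ℕ) : ℕ :=
  T.alphaOn wv we Set.univ

open Classical in
/-- The trigraph `T_{a → S}` obtained from `T` by turning the switchable pair `ab` into a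
strong edge and adding a new vertex `a' = none` strongly complete to `N(a) ∖ {b}` and
strongly anticomplete to everything else (including `a`). -/
noncomputable def expandS (T : Trigraph V) (a b : V) : Trigraph (Option V) where
  θ := fun u v =>
    match u, v with
    | some u, some v => if (u = a ∧ v = b) ∨ (u = b ∧ v = a) then 1 else T.θ u v
    | some u, none => if T.Adj a u ∧ u ≠ b then 1 else -1
    | none, some v => if T.Adj a v ∧ v ≠ b then 1 else -1
    | none, none => -1
  symm := by
    rintro (_ | u) (_ | v)
    · rfl
    · rfl
    · rfl
    · dsimp only
      have hiff : ((u = a ∧ v = b) ∨ (u = b ∧ v = a)) ↔ ((v = a ∧ u = b) ∨ (v = b ∧ u = a)) := by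
        tauto
      rw [if_congr hiff rfl (T.symm u v)]
  range := by
    rintro (_ | u) (_ | v) h
    · exact absurd rfl h
    · dsimp only; split <;> simp
    · dsimp only; split <;> simp
    · dsimp only
      split
      · simp
      · exact T.range u v fun hh => h (by rw [hh])

open Classical in
/-- The trigraph `T_{a → K}`, defined like `T_{a → S}` except that the new vertex `a'` is in
addition strongly adjacent to `a`. -/
noncomputable def expandK (T : Trigraph V) (a b : V) : Trigraph (Option V) where
  θ := fun u v =>
    match u, v with
    | some u, some v => if (u = a ∧ v = b) ∨ (u = b ∧ v = a) then 1 else T.θ u v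
    | some u, none => if (T.Adj a u ∧ u ≠ b) ∨ u = a then 1 else -1
    | none, some v => if (T.Adj a v ∧ v ≠ b) ∨ v = a then 1 else -1
    | none, none => -1
  symm := by
    rintro (_ | u) (_ | v)
    · rfl
    · rfl
    · rfl
    · dsimp only
      have hiff : ((u = a ∧ v = b) ∨ (u = b ∧ v = a)) ↔ ((v = a ∧ u = b) ∨ (v = b ∧ u = a)) := by
        tauto
      rw [if_congr hiff rfl (T.symm u v)]
  range := by
    rintro (_ | u) (_ | v) h
    · exact absurd rfl h
    · dsimp only; split <;> simp
    · dsimp only; split <;> simp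
    · dsimp only
      split
      · simp
      · exact T.range u v fun hh => h (by rw [hh])

/-- Vertex weights for `T_{a → S}`. -/
def wvS (wv : V → ℕ) (we : V → V → ℕ) (a b : V) [DecidableEq V] : Option V → ℕ
  | some v => if v = a then wv a + wv b - we a b else wv v
  | none => we a b - wv b

/-- Vertex weights for `T_{a → K}`. -/
def wvK (wv : V → ℕ) (we : V → V → ℕ) (a b : V) : Option V → ℕ
  | some v => wv v
  | none => we a b - wv b

/-- Switchable-pair weights for `T_{a → S}` and `T_{a → K}`. -/
def weO (we : V → V → ℕ) : Option V → Option V → ℕ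
  | some u, some v => we u v
  | _, _ => 0

end Trigraph

section Helpers

open Finset

namespace Trigraph

variable {V V₂ : Type*}

lemma SAnti.symm' {T : Trigraph V} {u v : V} (h : T.SAnti u v) : T.SAnti v u :=
  ⟨h.1.symm, (T.symm v u).trans h.2⟩

lemma Switch.symm' {T : Trigraph V} {u v : V} (h : T.Switch u v) : T.Switch v u :=
  ⟨h.1.symm, (T.symm v u).trans h.2⟩

lemma SAnti.anti {T : Trigraph V} {u v : V} (h : T.SAnti u v) : T.Anti u v :=
  ⟨h.1, Or.inl h.2⟩

lemma not_switch_self {T : Trigraph V} (u : V) : ¬ T.Switch u u := fun h => h.1 rfl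

lemma SAnti.not_switch {T : Trigraph V} {u v : V} (h : T.SAnti u v) : ¬ T.Switch u v :=
  fun hs => by have := h.2; have := hs.2; omega

private lemma even_sum_symm [DecidableEq V] (g : V → V → ℕ) (hg : ∀ u v, g u v = g v u)
    (hd : ∀ u, g u u = 0) (S : Finset V) : Even (∑ u ∈ S, ∑ v ∈ S, g u v) := by
  classical
  induction S using Finset.induction with
  | empty => simp
  | @insert a S ha ih =>
    simp only [Finset.sum_insert ha, hd, Finset.sum_add_distrib, zero_add]
    have h1 : ∑ u ∈ S, g u a = ∑ v ∈ S, g a v := Finset.sum_congr rfl fun u _ => hg u a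
    rw [h1]
    obtain ⟨k, hk⟩ := ih
    exact ⟨(∑ v ∈ S, g a v) + k, by omega⟩

lemma weightF_eq [DecidableEq V] (T : Trigraph V) (wv : V → ℕ) (we : V → V → ℕ)
    (S : Finset V) :
    T.weightF wv we S
      = (∑ v ∈ S.filter (fun v => ∀ u ∈ S, u ≠ v → T.SAnti u v), wv v)
        + (∑ u ∈ S, ∑ v ∈ S, if T.Switch u v then we u v else 0) / 2 := by
  unfold weightF
  congr 1
  · exact Finset.sum_congr (Finset.filter_congr_decidable _ _ _) (fun _ _ => rfl)
  · congr 1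
    refine Finset.sum_congr rfl fun u _ => Finset.sum_congr rfl fun v _ => ?_
    by_cases h : T.Switch u v
    · rw [if_pos h, if_pos h]
    · rw [if_neg h, if_neg h]

lemma weightF_union [DecidableEq V] (T : Trigraph V) (wv : V → ℕ) (we : V → V → ℕ)
    (hsym : ∀ u v, T.Switch u v → we u v = we v u)
    (S₁ S₂ : Finset V) (hX : ∀ u ∈ S₁, ∀ v ∈ S₂, T.SAnti u v) :
    T.weightF wv we (S₁ ∪ S₂) = T.weightF wv we S₁ + T.weightF wv we S₂ := by
  classical
  have hdisj : Disjoint S₁ S₂ := by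
    rw [Finset.disjoint_left]
    intro a h1 h2
    exact (hX a h1 a h2).1 rfl
  simp only [weightF_eq]
  set g : V → V → ℕ := fun u v => if T.Switch u v then we u v else 0 with hgdef
  have hgsym : ∀ u v, g u v = g v u := by
    intro u v
    by_cases h : T.Switch u v
    · rw [hgdef]; simp only [if_pos h, if_pos h.symm']; exact hsym u v h
    · rw [hgdef]; simp only [if_neg h, if_neg (fun hh => h (Switch.symm' hh))]
  have hgdiag : ∀ u, g u u = 0 := fun u => if_neg (not_switch_self u)
  have hcross12 : ∀ u ∈ S₁, ∀ v ∈ S₂, g u v = 0 := fun u hu v hv =>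
    if_neg (hX u hu v hv).not_switch
  have hcross21 : ∀ u ∈ S₂, ∀ v ∈ S₁, g u v = 0 := fun u hu v hv =>
    if_neg ((hX v hv u hu).symm').not_switch
  have hfilt : (S₁ ∪ S₂).filter (fun v => ∀ u ∈ S₁ ∪ S₂, u ≠ v → T.SAnti u v)
      = S₁.filter (fun v => ∀ u ∈ S₁, u ≠ v → T.SAnti u v)
        ∪ S₂.filter (fun v => ∀ u ∈ S₂, u ≠ v → T.SAnti u v) := by
    ext v
    simp only [Finset.mem_filter, Finset.mem_union]
    constructor
    · rintro ⟨hv | hv, hall⟩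
      · exact Or.inl ⟨hv, fun u hu hne => hall u (Or.inl hu) hne⟩
      · exact Or.inr ⟨hv, fun u hu hne => hall u (Or.inr hu) hne⟩
    · rintro (⟨hv, hall⟩ | ⟨hv, hall⟩)
      · refine ⟨Or.inl hv, ?_⟩
        rintro u (hu | hu) hne
        · exact hall u hu hne
        · exact ((hX v hv u hu).symm')
      · refine ⟨Or.inr hv, ?_⟩
        rintro u (hu | hu) hne
        · exact hX u hu v hv
        · exact hall u hu hne
  rw [hfilt, Finset.sum_union (hdisj.mono (Finset.filter_subset _ _) (Finset.filter_subset _ _))]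
  have hsw : ∑ u ∈ S₁ ∪ S₂, ∑ v ∈ S₁ ∪ S₂, g u v
      = (∑ u ∈ S₁, ∑ v ∈ S₁, g u v) + ∑ u ∈ S₂, ∑ v ∈ S₂, g u v := by
    rw [Finset.sum_union hdisj]
    have h1 : ∑ u ∈ S₁, ∑ v ∈ S₁ ∪ S₂, g u v = ∑ u ∈ S₁, ∑ v ∈ S₁, g u v := by
      refine Finset.sum_congr rfl fun u hu => ?_
      rw [Finset.sum_union hdisj, Finset.sum_eq_zero (hcross12 u hu), add_zero]
    have h2 : ∑ u ∈ S₂, ∑ v ∈ S₁ ∪ S₂, g u v = ∑ u ∈ S₂, ∑ v ∈ S₂, g u v := by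
      refine Finset.sum_congr rfl fun u hu => ?_
      rw [Finset.sum_union hdisj, Finset.sum_eq_zero (hcross21 u hu), zero_add]
    rw [h1, h2]
  obtain ⟨k₁, hk₁⟩ := even_sum_symm g hgsym hgdiag S₁
  obtain ⟨k₂, hk₂⟩ := even_sum_symm g hgsym hgdiag S₂
  rw [hsw]
  simp only [hgdef] at hk₁ hk₂ ⊢
  omega

lemma weightF_image [DecidableEq V] [DecidableEq V₂] (T₁ : Trigraph V) (T₂ : Trigraph V₂) (wv₁ : V → ℕ) (we₁ : V → V → ℕ)
    (wv₂ : V₂ → ℕ) (we₂ : V₂ → V₂ → ℕ) (f : V → V₂) (S : Finset V)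
    (hinj : Set.InjOn f ↑S)
    (hθ : ∀ u ∈ S, ∀ v ∈ S, u ≠ v → T₂.θ (f u) (f v) = T₁.θ u v)
    (hwv : ∀ v ∈ S, wv₂ (f v) = wv₁ v)
    (hwe : ∀ u ∈ S, ∀ v ∈ S, T₁.Switch u v → we₂ (f u) (f v) = we₁ u v) :
    T₂.weightF wv₂ we₂ (S.image f) = T₁.weightF wv₁ we₁ S := by
  classical
  have hne : ∀ u ∈ S, ∀ v ∈ S, u ≠ v → f u ≠ f v := by
    intro u hu v hv huv h
    exact huv (hinj hu hv h)
  have hanti_iff : ∀ u ∈ S, ∀ v ∈ S, u ≠ v → (T₂.SAnti (f u) (f v) ↔ T₁.SAnti u v) := by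
    intro u hu v hv huv
    unfold SAnti
    rw [hθ u hu v hv huv]
    exact and_congr_left fun _ => ⟨fun _ => huv, fun _ => hne u hu v hv huv⟩
  have hsw_iff : ∀ u ∈ S, ∀ v ∈ S, (T₂.Switch (f u) (f v) ↔ T₁.Switch u v) := by
    intro u hu v hv
    by_cases huv : u = v
    · subst huv
      exact iff_of_false (not_switch_self _) (not_switch_self _)
    · unfold Switch
      rw [hθ u hu v hv huv]
      exact and_congr_left fun _ => ⟨fun _ => huv, fun _ => hne u hu v hv huv⟩
  simp only [weightF_eq]
  have hfilt : (S.image f).filter (fun w => ∀ u ∈ S.image f, u ≠ w → T₂.SAnti u w)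
      = (S.filter (fun v => ∀ u ∈ S, u ≠ v → T₁.SAnti u v)).image f := by
    ext w
    simp only [Finset.mem_filter, Finset.mem_image]
    constructor
    · rintro ⟨⟨v, hv, rfl⟩, hall⟩
      refine ⟨v, ⟨hv, fun u hu hne2 => ?_⟩, rfl⟩
      exact (hanti_iff u hu v hv hne2).mp (hall (f u) ⟨u, hu, rfl⟩ (hne u hu v hv hne2))
    · rintro ⟨v, ⟨hv, hall⟩, rfl⟩
      refine ⟨⟨v, hv, rfl⟩, ?_⟩
      rintro w ⟨u, hu, rfl⟩ hnefu
      have hne' : u ≠ v := fun h => hnefu (congrArg f h)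
      exact (hanti_iff u hu v hv hne').mpr (hall u hu hne')
  rw [hfilt, Finset.sum_image (fun u hu v hv h => hinj (Finset.mem_coe.mpr (Finset.filter_subset _ _ hu)) (Finset.mem_coe.mpr (Finset.filter_subset _ _ hv)) h)]
  have h1 : ∑ v ∈ S.filter (fun v => ∀ u ∈ S, u ≠ v → T₁.SAnti u v), wv₂ (f v)
      = ∑ v ∈ S.filter (fun v => ∀ u ∈ S, u ≠ v → T₁.SAnti u v), wv₁ v :=
    Finset.sum_congr rfl fun v hv => hwv v (Finset.filter_subset _ _ hv)
  rw [h1]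
  have h2 : ∑ u ∈ S.image f, ∑ v ∈ S.image f, (if T₂.Switch u v then we₂ u v else 0)
      = ∑ u ∈ S, ∑ v ∈ S, (if T₁.Switch u v then we₁ u v else 0) := by
    rw [Finset.sum_image (fun u hu v hv h => hinj hu hv h)]
    refine Finset.sum_congr rfl fun u hu => ?_
    rw [Finset.sum_image (fun a ha b hb h => hinj ha hb h)]
    refine Finset.sum_congr rfl fun v hv => ?_
    by_cases h : T₁.Switch u v
    · rw [if_pos ((hsw_iff u hu v hv).mpr h), if_pos h]
      exact hwe u hu v hv h
    · rw [if_neg (fun hh => h ((hsw_iff u hu v hv).mp hh)), if_neg h]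
  rw [h2]

lemma weightF_singleton [DecidableEq V] (T : Trigraph V) (wv : V → ℕ) (we : V → V → ℕ) (a : V) :
    T.weightF wv we {a} = wv a := by
  simp only [weightF_eq]
  have h1 : ({a} : Finset V).filter (fun v => ∀ u ∈ ({a} : Finset V), u ≠ v → T.SAnti u v)
      = {a} := by
    refine Finset.filter_eq_self.mpr fun v hv => ?_
    simp only [Finset.mem_singleton] at hv
    subst hv
    intro u hu hne
    simp only [Finset.mem_singleton] at hu
    exact absurd hu hne
  rw [h1]
  simp [not_switch_self]

lemma weightF_pair [DecidableEq V] (T : Trigraph V) (wv : V → ℕ) (we : V → V → ℕ) {a b : V}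
    (hab : T.Switch a b) (hsym : we a b = we b a) :
    T.weightF wv we {a, b} = we a b := by
  classical
  have hne : a ≠ b := hab.1
  simp only [weightF_eq]
  have h1 : ({a, b} : Finset V).filter (fun v => ∀ u ∈ ({a, b} : Finset V), u ≠ v → T.SAnti u v)
      = ∅ := by
    refine Finset.filter_eq_empty_iff.mpr fun v hv => ?_
    simp only [Finset.mem_insert, Finset.mem_singleton] at hv
    rcases hv with rfl | rfl
    · intro h
      have := (h b (by simp) hne.symm).2
      have := hab.symm'.2
      omega
    · intro h
      have := (h a (by simp [hne]) hne).2
      have := hab.2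
      omega
  rw [h1, Finset.sum_empty]
  have h2 : ∑ u ∈ ({a, b} : Finset V), ∑ v ∈ ({a, b} : Finset V),
      (if T.Switch u v then we u v else 0) = we a b + we a b := by
    rw [Finset.sum_pair hne, Finset.sum_pair hne, Finset.sum_pair hne]
    rw [if_neg (not_switch_self a), if_neg (not_switch_self b), if_pos hab, if_pos hab.symm']
    omega
  rw [h2]
  omega

lemma le_alphaOn [Fintype V] (T : Trigraph V) (wv : V → ℕ) (we : V → V → ℕ) {X : Set V}
    {S : Finset V} (hS : ↑S ⊆ X) (hst : T.StableF S) :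
    T.weightF wv we S ≤ T.alphaOn wv we X := by
  classical
  apply Finset.le_sup
  simp only [Finset.mem_filter, Finset.mem_powerset]
  exact ⟨Finset.subset_univ _, hS, hst⟩

lemma alphaOn_le [Fintype V] (T : Trigraph V) (wv : V → ℕ) (we : V → V → ℕ) {X : Set V}
    {n : ℕ} (h : ∀ S : Finset V, ↑S ⊆ X → T.StableF S → T.weightF wv we S ≤ n) :
    T.alphaOn wv we X ≤ n := by
  classical
  apply Finset.sup_le
  intro S hS
  simp only [Finset.mem_filter, Finset.mem_powerset] at hS
  exact h S hS.2.1 hS.2.2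

lemma exists_alphaOn [Fintype V] (T : Trigraph V) (wv : V → ℕ) (we : V → V → ℕ) (X : Set V) :
    ∃ S : Finset V, ↑S ⊆ X ∧ T.StableF S ∧ T.weightF wv we S = T.alphaOn wv we X := by
  classical
  have hne : (Finset.univ.powerset.filter
      fun S : Finset V => ↑S ⊆ X ∧ T.StableF S).Nonempty := by
    refine ⟨∅, ?_⟩
    simp only [Finset.mem_filter, Finset.mem_powerset]
    exact ⟨Finset.empty_subset _, by simp, fun u hu => by simp at hu⟩
  obtain ⟨S, hmem, hval⟩ := Finset.exists_mem_eq_sup _ hne (T.weightF wv we)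
  simp only [Finset.mem_filter, Finset.mem_powerset] at hmem
  exact ⟨S, hmem.2.1, hmem.2.2, hval.symm⟩

lemma alphaW_eq [Fintype V] (T : Trigraph V) (wv : V → ℕ) (we : V → V → ℕ) :
    T.alphaW wv we = T.alphaOn wv we Set.univ := rfl

end Trigraph

end Helpers

open Classical in
/-- `α(T) = α(T_Y)`: for a weighted monogamous trigraph `T` and a decomposition `(X, Y)`
of `T`, the maximum weight of a stable set of `T` equals the maximum weight of a stable set
of the block `T_Y`, weighted as in the paper.  In the homogeneous set case (with chosen
marker vertex `x ∈ X`), `T_Y = T[Y ∪ {x}]` and `x` gets weight `α(T[X])`.  In the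
homogeneous pair case, the markers `a, b` get weights `α(T[A])`, `α(T[B])` and the
switchable pair `ab` gets weight `α(T[A ∪ B])`. -/
theorem alpha_eq_alpha_blockY {V : Type} [Fintype V] [DecidableEq V] (T : Trigraph V)
    (hmono : T.Monogamous) (wv : V → ℕ) (we : V → V → ℕ) (hw : T.GoodWeights wv we) :
    (∀ X : Set V, T.HomSet X → ∀ x ∈ X,
      T.alphaW wv we =
        T.alphaOn (Function.update wv x (T.alphaOn wv we X)) we (Xᶜ ∪ {x})) ∧
    (∀ A B C D E F : Set V, T.IsSplit A B C D E F →
      ((A ∪ B).ncard ≤ 6 ∨ (C.Nonempty ∧ D.Nonempty)) →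
      T.alphaW wv we =
        (T.blockYPair A B C D E).alphaW
          (Sum.elim (fun u => wv ↑u)
            (fun i => if i = 0 then T.alphaOn wv we A else T.alphaOn wv we B))
          (fun p q =>
            match p, q with
            | Sum.inl u, Sum.inl v => we ↑u ↑v
            | Sum.inr _, Sum.inr _ => T.alphaOn wv we (A ∪ B)
            | _, _ => 0)) := by
  classical
  have hsym : ∀ u v : V, T.Switch u v → we u v = we v u := fun u v _ => hw.1 u v
  have hstsub : ∀ S S' : Finset V, S' ⊆ S → T.StableF S → T.StableF S' :=
    fun S S' hsub h u hu v hv hne => h u (hsub hu) v (hsub hv) hne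
  have hid : ∀ (w1 w2 : V → ℕ) (S : Finset V), (∀ v ∈ S, w2 v = w1 v) →
      T.weightF w1 we S = T.weightF w2 we S := by
    intro w1 w2 S hagree
    have h := Trigraph.weightF_image T T w1 we w2 we id S (fun a _ b _ h => h)
      (fun u _ v _ _ => rfl) (fun v hv => hagree v hv) (fun u _ v _ _ => rfl)
    rw [Finset.image_id] at h
    exact h.symm
  constructor
  · intro X hX x hx
    obtain ⟨-, -, hhom⟩ := hX
    set αX := T.alphaOn wv we X with hαX
    set wv' := Function.update wv x αX with hwv'def
    have hcongr : ∀ S : Finset V, x ∉ S → T.weightF wv' we S = T.weightF wv we S := by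
      intro S hxS
      exact hid wv' wv S (fun v hv =>
        (Function.update_of_ne (fun hh : v = x => hxS (hh ▸ hv)) αX wv).symm)
    have hwv'x : wv' x = αX := by simp [hwv'def]
    apply le_antisymm
    · rw [Trigraph.alphaW_eq]
      apply Trigraph.alphaOn_le
      intro S _ hSst
      set SO := S.filter (fun v => v ∉ X) with hSOdef
      set SX := S.filter (fun v => v ∈ X) with hSXdef
      have hSOX : ∀ v ∈ SO, v ∉ X := fun v hv => (Finset.mem_filter.mp hv).2
      have hSXX : ∀ v ∈ SX, v ∈ X := fun v hv => (Finset.mem_filter.mp hv).2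
      have hunion : S = SO ∪ SX := by
        ext v
        simp only [Finset.mem_union, hSOdef, hSXdef, Finset.mem_filter]
        tauto
      by_cases hXe : SX.Nonempty
      · obtain ⟨y, hy⟩ := hXe
        have hyS : y ∈ S := (Finset.mem_filter.mp hy).1
        have hyX : y ∈ X := (Finset.mem_filter.mp hy).2
        have hanti : ∀ v ∈ SO, ∀ a ∈ X, T.SAnti v a := by
          intro v hv a ha
          rcases hhom v (hSOX v hv) with hcom | hant
          · exfalso
            have hvS : v ∈ S := (Finset.mem_filter.mp hv).1
            have hvy : v ≠ y := fun h => hSOX v hv (h ▸ hyX)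
            have h1 := hSst v hvS y hyS hvy
            have h2 := hcom y hyX
            rcases h1.2 with h | h <;> (have := h2.2; omega)
          · exact hant a ha
        have hcrossX : ∀ u ∈ SO, ∀ v ∈ SX, T.SAnti u v :=
          fun u hu v hv => hanti u hu v (hSXX v hv)
        have hsplit : T.weightF wv we S = T.weightF wv we SO + T.weightF wv we SX := by
          conv_lhs => rw [hunion]
          exact T.weightF_union wv we hsym SO SX hcrossX
        have h1 : T.weightF wv we SX ≤ αX :=
          T.le_alphaOn wv we (fun v hv => hSXX v (Finset.mem_coe.mp hv))
            (hstsub S SX (Finset.filter_subset _ _) hSst)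
        have hxSO : x ∉ SO := fun h => hSOX x h hx
        have hw2 : T.weightF wv' we (SO ∪ {x}) = T.weightF wv we SO + αX := by
          rw [T.weightF_union wv' we hsym SO {x} (fun u hu v hv => by
              rw [Finset.mem_singleton] at hv; subst hv; exact hanti u hu _ hx),
            T.weightF_singleton, hcongr SO hxSO, hwv'x]
        have hstable2 : T.StableF (SO ∪ {x}) := by
          intro u hu v hv hne
          rw [Finset.mem_union, Finset.mem_singleton] at hu hv
          rcases hu with hu | rfl <;> rcases hv with hv | rfl
          · exact hSst u ((Finset.filter_subset _ _) hu) v ((Finset.filter_subset _ _) hv) hne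
          · exact (hanti u hu _ hx).anti
          · exact ((hanti v hv _ hx).symm').anti
          · exact absurd rfl hne
        have hsub2 : ↑(SO ∪ {x}) ⊆ (Xᶜ ∪ {x} : Set V) := by
          intro v hv
          rw [Finset.coe_union, Finset.coe_singleton] at hv
          rcases hv with hv | hv
          · exact Or.inl (hSOX v hv)
          · exact Or.inr hv
        calc T.weightF wv we S = T.weightF wv we SO + T.weightF wv we SX := hsplit
          _ ≤ T.weightF wv we SO + αX := by omega
          _ = T.weightF wv' we (SO ∪ {x}) := hw2.symm
          _ ≤ _ := T.le_alphaOn wv' we hsub2 hstable2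
      · have hallout : ∀ v ∈ S, v ∉ X := by
          intro v hv hvX
          exact hXe ⟨v, Finset.mem_filter.mpr ⟨hv, hvX⟩⟩
        have hxS : x ∉ S := fun h => hallout x h hx
        calc T.weightF wv we S = T.weightF wv' we S := (hcongr S hxS).symm
          _ ≤ _ := T.le_alphaOn wv' we
              (fun v hv => Or.inl (hallout v (Finset.mem_coe.mp hv))) hSst
    · apply Trigraph.alphaOn_le
      intro S' hsub hst
      by_cases hxS : x ∈ S'
      · set SO := S'.erase x with hSOdef
        have hSOprop : ∀ v ∈ SO, v ∈ S' ∧ v ≠ x :=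
          fun v hv => ⟨Finset.mem_of_mem_erase hv, Finset.ne_of_mem_erase hv⟩
        have hSOXc : ∀ v ∈ SO, v ∉ X := by
          intro v hv
          obtain ⟨hvS, hvx⟩ := hSOprop v hv
          rcases hsub (Finset.mem_coe.mpr hvS) with h | h
          · exact h
          · exact absurd h hvx
        have hanti : ∀ v ∈ SO, ∀ a ∈ X, T.SAnti v a := by
          intro v hv a ha
          rcases hhom v (hSOXc v hv) with hcom | hant
          · exfalso
            obtain ⟨hvS, hvx⟩ := hSOprop v hv
            have h1 := hst v hvS x hxS hvx
            have h2 := hcom x hx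
            rcases h1.2 with h | h <;> (have := h2.2; omega)
          · exact hant a ha
        obtain ⟨SX, hSXsub, hSXst, hSXw⟩ := T.exists_alphaOn wv we X
        have hSXinX : ∀ v ∈ SX, v ∈ X := fun v hv => hSXsub (Finset.mem_coe.mpr hv)
        have hS'eq : S' = SO ∪ {x} := by
          ext v
          rw [Finset.mem_union, Finset.mem_singleton, hSOdef, Finset.mem_erase]
          constructor
          · intro h
            by_cases hvx : v = x
            · exact Or.inr hvx
            · exact Or.inl ⟨hvx, h⟩
          · rintro (⟨_, h⟩ | rfl)
            · exact h
            · exact hxS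
        have hw1 : T.weightF wv' we S' = T.weightF wv we SO + αX := by
          rw [hS'eq, T.weightF_union wv' we hsym SO {x} (fun u hu v hv => by
              rw [Finset.mem_singleton] at hv; subst hv; exact hanti u hu _ hx),
            T.weightF_singleton, hcongr SO (fun h => (hSOprop x h).2 rfl), hwv'x]
        have hcross : ∀ u ∈ SO, ∀ v ∈ SX, T.SAnti u v :=
          fun u hu v hv => hanti u hu v (hSXinX v hv)
        have hw2 : T.weightF wv we (SO ∪ SX) = T.weightF wv we SO + αX := by
          rw [T.weightF_union wv we hsym SO SX hcross, hSXw]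
        have hstable2 : T.StableF (SO ∪ SX) := by
          intro u hu v hv hne
          rw [Finset.mem_union] at hu hv
          rcases hu with hu | hu <;> rcases hv with hv | hv
          · exact hst u (hSOprop u hu).1 v (hSOprop v hv).1 hne
          · exact (hcross u hu v hv).anti
          · exact ((hcross v hv u hu).symm').anti
          · exact hSXst u hu v hv hne
        calc T.weightF wv' we S' = T.weightF wv we (SO ∪ SX) := by rw [hw1, hw2]
          _ ≤ T.alphaW wv we := T.le_alphaOn wv we (fun v _ => Set.mem_univ v) hstable2
      · rw [hcongr S' hxS]
        exact T.le_alphaOn wv we (fun v _ => Set.mem_univ v) hst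
  · intro A B C D E F hsplit _
    obtain ⟨hA, hB, hAB, hCD, hCE, hCF, hDE, hDF, hEF, hcdef, hACE, hADF, hBDE, hBCF,
      -, -, -, -⟩ := hsplit
    set TB := T.blockYPair A B C D E with hTBdef
    set wv2 := (Sum.elim (fun u => wv ↑u)
      (fun i => if i = 0 then T.alphaOn wv we A else T.alphaOn wv we B) :
        (↥(A ∪ B)ᶜ ⊕ Fin 2) → ℕ) with hwv2def
    set we2 := (fun p q =>
      match p, q with
      | Sum.inl u, Sum.inl v => we ↑u ↑v
      | Sum.inr _, Sum.inr _ => T.alphaOn wv we (A ∪ B)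
      | _, _ => 0 : (↥(A ∪ B)ᶜ ⊕ Fin 2) → (↥(A ∪ B)ᶜ ⊕ Fin 2) → ℕ) with hwe2def
    have hwe2sym : ∀ p q, we2 p q = we2 q p := by
      rintro (u | i) (v | j)
      · exact hw.1 _ _
      · rfl
      · rfl
      · rfl
    have hwv2r0 : wv2 (Sum.inr 0) = T.alphaOn wv we A := by
      show (if (0 : Fin 2) = 0 then T.alphaOn wv we A else T.alphaOn wv we B) = _
      exact if_pos rfl
    have hwv2r1 : wv2 (Sum.inr 1) = T.alphaOn wv we B := by
      show (if (1 : Fin 2) = 0 then T.alphaOn wv we A else T.alphaOn wv we B) = _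
      exact if_neg (by decide)
    have hθ0pos : ∀ u : ↥(A ∪ B)ᶜ, (u : V) ∈ C ∪ E →
        TB.θ (Sum.inl u) (Sum.inr 0) = 1 :=
      fun u hu => if_pos (Or.inl ⟨rfl, hu⟩)
    have hθ0neg : ∀ u : ↥(A ∪ B)ᶜ, (u : V) ∉ C ∪ E →
        TB.θ (Sum.inl u) (Sum.inr 0) = -1 := by
      intro u hu
      refine if_neg ?_
      rintro (⟨-, h⟩ | ⟨h01, -⟩)
      · exact hu h
      · exact absurd h01 (by decide)
    have hθ1pos : ∀ u : ↥(A ∪ B)ᶜ, (u : V) ∈ D ∪ E →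
        TB.θ (Sum.inl u) (Sum.inr 1) = 1 :=
      fun u hu => if_pos (Or.inr ⟨rfl, hu⟩)
    have hθ1neg : ∀ u : ↥(A ∪ B)ᶜ, (u : V) ∉ D ∪ E →
        TB.θ (Sum.inl u) (Sum.inr 1) = -1 := by
      intro u hu
      refine if_neg ?_
      rintro (⟨h10, -⟩ | ⟨-, h⟩)
      · exact absurd h10 (by decide)
      · exact hu h
    have hm01ne : (Sum.inr 0 : ↥(A ∪ B)ᶜ ⊕ Fin 2) ≠ Sum.inr 1 :=
      fun h => absurd (Sum.inr.inj h) (by decide)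
    have hsw01 : TB.Switch (Sum.inr 0) (Sum.inr 1) := ⟨hm01ne, rfl⟩
    have hYmem : ∀ v : V, v ∈ (A ∪ B)ᶜ ↔ v ∈ C ∪ D ∪ E ∪ F := fun v => by rw [← hcdef]
    have hDF_CE : ∀ v : V, v ∈ D ∪ F → v ∉ C ∪ E := by
      rintro v (hv | hv) (hc | hc)
      · exact Set.disjoint_left.mp hCD hc hv
      · exact Set.disjoint_left.mp hDE hv hc
      · exact Set.disjoint_left.mp hCF hc hv
      · exact Set.disjoint_left.mp hEF hc hv
    have hCF_DE : ∀ v : V, v ∈ C ∪ F → v ∉ D ∪ E := by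
      rintro v (hv | hv) (hd | hd)
      · exact Set.disjoint_left.mp hCD hv hd
      · exact Set.disjoint_left.mp hCE hv hd
      · exact Set.disjoint_left.mp hDF hd hv
      · exact Set.disjoint_left.mp hEF hd hv
    have hYsplit : ∀ v : V, v ∈ (A ∪ B)ᶜ → v ∉ C ∪ E → v ∈ D ∪ F := by
      intro v hv hce
      rcases (hYmem v).mp hv with ((hc | hd) | he) | hf
      · exact absurd (Or.inl hc) hce
      · exact Or.inl hd
      · exact absurd (Or.inr he) hce
      · exact Or.inr hf
    have hYsplit' : ∀ v : V, v ∈ (A ∪ B)ᶜ → v ∉ D ∪ E → v ∈ C ∪ F := by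
      intro v hv hde
      rcases (hYmem v).mp hv with ((hc | hd) | he) | hf
      · exact Or.inl hc
      · exact absurd (Or.inl hd) hde
      · exact absurd (Or.inr he) hde
      · exact Or.inr hf
    have hFonly : ∀ v : V, v ∈ D ∪ F → v ∈ C ∪ F → v ∈ F := by
      rintro v (hv | hv) (hc | hc)
      · exact absurd hv (Set.disjoint_left.mp hCD hc)
      · exact hc
      · exact hv
      · exact hv
    set f : V → (↥(A ∪ B)ᶜ ⊕ Fin 2) :=
      fun v => if h : v ∈ (A ∪ B)ᶜ then Sum.inl ⟨v, h⟩ else Sum.inr 0 with hfdef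
    have hfY : ∀ (v : V) (h : v ∈ (A ∪ B)ᶜ), f v = Sum.inl ⟨v, h⟩ := fun v h => dif_pos h
    set g : (↥(A ∪ B)ᶜ ⊕ Fin 2) → V := Sum.elim Subtype.val (fun _ => hA.choose) with hgdef
    -- transport of weights along f
    have himg : ∀ SS : Finset V, (∀ v ∈ SS, v ∈ (A ∪ B)ᶜ) →
        TB.weightF wv2 we2 (SS.image f) = T.weightF wv we SS := by
      intro SS hmem
      apply Trigraph.weightF_image
      · intro u hu v hv huv
        rw [Finset.mem_coe] at hu hv
        rw [hfY u (hmem u hu), hfY v (hmem v hv)] at huv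
        exact congrArg Subtype.val (Sum.inl.inj huv)
      · intro u hu v hv _
        rw [hfY u (hmem u hu), hfY v (hmem v hv)]
        rfl
      · intro v hv
        rw [hfY v (hmem v hv)]
        rfl
      · intro u hu v hv _
        rw [hfY u (hmem u hu), hfY v (hmem v hv)]
    have hstimg : ∀ SS : Finset V, (∀ v ∈ SS, v ∈ (A ∪ B)ᶜ) → T.StableF SS →
        TB.StableF (SS.image f) := by
      intro SS hmem hstS p hp q hq hpq
      obtain ⟨u, hu, rfl⟩ := Finset.mem_image.mp hp
      obtain ⟨v, hv, rfl⟩ := Finset.mem_image.mp hq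
      have hune : u ≠ v := fun h => hpq (congrArg f h)
      have hanti := hstS u hu v hv hune
      refine ⟨hpq, ?_⟩
      rw [hfY u (hmem u hu), hfY v (hmem v hv)]
      exact hanti.2
    simp only [Trigraph.alphaW_eq]
    apply le_antisymm
    · -- α(T) ≤ α(TB)
      apply Trigraph.alphaOn_le
      intro S _ hst
      set SA := S.filter (fun v => v ∈ A) with hSAdef
      set SB := S.filter (fun v => v ∈ B) with hSBdef
      set SY := S.filter (fun v => v ∈ (A ∪ B)ᶜ) with hSYdef
      have hSAm : ∀ v ∈ SA, v ∈ S ∧ v ∈ A := fun v hv => Finset.mem_filter.mp hv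
      have hSBm : ∀ v ∈ SB, v ∈ S ∧ v ∈ B := fun v hv => Finset.mem_filter.mp hv
      have hSYm : ∀ v ∈ SY, v ∈ S ∧ v ∈ (A ∪ B)ᶜ := fun v hv => Finset.mem_filter.mp hv
      have hSYY : ∀ v ∈ SY, v ∈ (A ∪ B)ᶜ := fun v hv => (hSYm v hv).2
      have hSeq : S = SA ∪ SB ∪ SY := by
        ext v
        simp only [Finset.mem_union, hSAdef, hSBdef, hSYdef, Finset.mem_filter]
        constructor
        · intro hv
          by_cases ha : v ∈ A
          · exact Or.inl (Or.inl ⟨hv, ha⟩)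
          by_cases hb : v ∈ B
          · exact Or.inl (Or.inr ⟨hv, hb⟩)
          · exact Or.inr ⟨hv, fun h => h.elim ha hb⟩
        · rintro ((⟨hv, -⟩ | ⟨hv, -⟩) | ⟨hv, -⟩) <;> exact hv
      have hstSY : T.StableF SY := fun u hu v hv hne =>
        hst u (hSYm u hu).1 v (hSYm v hv).1 hne
      have hwSY := himg SY hSYY
      have hstbSY := hstimg SY hSYY hstSY
      -- key: if SA nonempty then SY ⊆ D ∪ F
      have hkeyA : SA.Nonempty → ∀ v ∈ SY, v ∈ D ∪ F := by
        rintro ⟨a0, ha0⟩ v hv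
        obtain ⟨ha0S, ha0A⟩ := hSAm a0 ha0
        obtain ⟨hvS, hvY⟩ := hSYm v hv
        by_cases hce : v ∈ C ∪ E
        · exfalso
          have hedge := hACE a0 ha0A v hce
          have hanti := hst a0 ha0S v hvS hedge.1
          rcases hanti.2 with h | h <;> (have := hedge.2; omega)
        · exact hYsplit v hvY hce
      have hkeyB : SB.Nonempty → ∀ v ∈ SY, v ∈ C ∪ F := by
        rintro ⟨b0, hb0⟩ v hv
        obtain ⟨hb0S, hb0B⟩ := hSBm b0 hb0
        obtain ⟨hvS, hvY⟩ := hSYm v hv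
        by_cases hde : v ∈ D ∪ E
        · exfalso
          have hedge := hBDE b0 hb0B v hde
          have hanti := hst b0 hb0S v hvS hedge.1
          rcases hanti.2 with h | h <;> (have := hedge.2; omega)
        · exact hYsplit' v hvY hde
      by_cases hSAne : SA.Nonempty <;> by_cases hSBne : SB.Nonempty
      · -- both nonempty: markers {0, 1}
        have hSYF : ∀ v ∈ SY, v ∈ F :=
          fun v hv => hFonly v (hkeyA hSAne v hv) (hkeyB hSBne v hv)
        have hcross : ∀ u ∈ SA ∪ SB, ∀ v ∈ SY, T.SAnti u v := by
          intro u hu v hv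
          rw [Finset.mem_union] at hu
          rcases hu with hu | hu
          · exact hADF u (hSAm u hu).2 v (Or.inr (hSYF v hv))
          · exact hBCF u (hSBm u hu).2 v (Or.inr (hSYF v hv))
        have hsplitw : T.weightF wv we S
            = T.weightF wv we (SA ∪ SB) + T.weightF wv we SY := by
          conv_lhs => rw [hSeq]
          exact T.weightF_union wv we hsym (SA ∪ SB) SY hcross
        have hwAB : T.weightF wv we (SA ∪ SB) ≤ T.alphaOn wv we (A ∪ B) := by
          refine T.le_alphaOn wv we ?_ ?_
          · intro v hv
            rw [Finset.mem_coe, Finset.mem_union] at hv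
            rcases hv with hv | hv
            · exact Or.inl (hSAm v hv).2
            · exact Or.inr (hSBm v hv).2
          · intro u hu v hv hne
            rw [Finset.mem_union] at hu hv
            have huS : u ∈ S := by rcases hu with hu | hu
                                   exacts [(hSAm u hu).1, (hSBm u hu).1]
            have hvS : v ∈ S := by rcases hv with hv | hv
                                   exacts [(hSAm v hv).1, (hSBm v hv).1]
            exact hst u huS v hvS hne
        have hmark0 : ∀ p ∈ SY.image f, TB.SAnti p (Sum.inr 0) := by
          intro p hp
          obtain ⟨v, hv, rfl⟩ := Finset.mem_image.mp hp
          rw [hfY v (hSYY v hv)]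
          exact ⟨Sum.inl_ne_inr, hθ0neg _ (hDF_CE v (Or.inr (hSYF v hv)))⟩
        have hmark1 : ∀ p ∈ SY.image f, TB.SAnti p (Sum.inr 1) := by
          intro p hp
          obtain ⟨v, hv, rfl⟩ := Finset.mem_image.mp hp
          rw [hfY v (hSYY v hv)]
          exact ⟨Sum.inl_ne_inr, hθ1neg _ (hCF_DE v (Or.inr (hSYF v hv)))⟩
        have hwpair : TB.weightF wv2 we2 {Sum.inr 0, Sum.inr 1}
            = T.alphaOn wv we (A ∪ B) :=
          TB.weightF_pair wv2 we2 hsw01 (hwe2sym (Sum.inr 0) (Sum.inr 1))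
        have hwblock : TB.weightF wv2 we2 (SY.image f ∪ {Sum.inr 0, Sum.inr 1})
            = T.weightF wv we SY + T.alphaOn wv we (A ∪ B) := by
          rw [TB.weightF_union wv2 we2 (fun p q _ => hwe2sym p q) (SY.image f)
              {Sum.inr 0, Sum.inr 1} (fun u hu v hv => by
                rw [Finset.mem_insert, Finset.mem_singleton] at hv
                rcases hv with rfl | rfl
                · exact hmark0 u hu
                · exact hmark1 u hu),
            hwpair, hwSY]
        have hstb : TB.StableF (SY.image f ∪ {Sum.inr 0, Sum.inr 1}) := by
          intro p hp q hq hpq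
          rw [Finset.mem_union, Finset.mem_insert, Finset.mem_singleton] at hp hq
          rcases hp with hp | hp | hp <;> rcases hq with hq | hq | hq
          · exact hstbSY p hp q hq hpq
          · subst hq; exact (hmark0 p hp).anti
          · subst hq; exact (hmark1 p hp).anti
          · subst hp; exact ((hmark0 q hq).symm').anti
          · subst hp; subst hq; exact absurd rfl hpq
          · subst hp; subst hq; exact ⟨hm01ne, Or.inr rfl⟩
          · subst hp; exact ((hmark1 q hq).symm').anti
          · subst hp; subst hq; exact ⟨hm01ne.symm, Or.inr rfl⟩
          · subst hp; subst hq; exact absurd rfl hpq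
        calc T.weightF wv we S
            = T.weightF wv we (SA ∪ SB) + T.weightF wv we SY := hsplitw
          _ ≤ T.weightF wv we SY + T.alphaOn wv we (A ∪ B) := by omega
          _ = TB.weightF wv2 we2 (SY.image f ∪ {Sum.inr 0, Sum.inr 1}) := hwblock.symm
          _ ≤ _ := TB.le_alphaOn wv2 we2 (fun p _ => Set.mem_univ p) hstb
      · -- SA nonempty, SB empty: marker 0
        have hSB0 : SB = ∅ := Finset.not_nonempty_iff_eq_empty.mp hSBne
        have hSeq2 : S = SA ∪ SY := by rw [hSeq, hSB0, Finset.union_empty]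
        have hSYDF := hkeyA hSAne
        have hcross : ∀ u ∈ SA, ∀ v ∈ SY, T.SAnti u v :=
          fun u hu v hv => hADF u (hSAm u hu).2 v (hSYDF v hv)
        have hsplitw : T.weightF wv we S
            = T.weightF wv we SA + T.weightF wv we SY := by
          conv_lhs => rw [hSeq2]
          exact T.weightF_union wv we hsym SA SY hcross
        have hwA : T.weightF wv we SA ≤ T.alphaOn wv we A :=
          T.le_alphaOn wv we (fun v hv => (hSAm v (Finset.mem_coe.mp hv)).2)
            (fun u hu v hv hne => hst u (hSAm u hu).1 v (hSAm v hv).1 hne)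
        have hmark0 : ∀ p ∈ SY.image f, TB.SAnti p (Sum.inr 0) := by
          intro p hp
          obtain ⟨v, hv, rfl⟩ := Finset.mem_image.mp hp
          rw [hfY v (hSYY v hv)]
          exact ⟨Sum.inl_ne_inr, hθ0neg _ (hDF_CE v (hSYDF v hv))⟩
        have hwblock : TB.weightF wv2 we2 (SY.image f ∪ {Sum.inr 0})
            = T.weightF wv we SY + T.alphaOn wv we A := by
          rw [TB.weightF_union wv2 we2 (fun p q _ => hwe2sym p q) (SY.image f)
              {Sum.inr 0} (fun u hu v hv => by
                rw [Finset.mem_singleton] at hv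
                subst hv
                exact hmark0 u hu),
            TB.weightF_singleton, hwSY, hwv2r0]
        have hstb : TB.StableF (SY.image f ∪ {Sum.inr 0}) := by
          intro p hp q hq hpq
          rw [Finset.mem_union, Finset.mem_singleton] at hp hq
          rcases hp with hp | rfl <;> rcases hq with hq | rfl
          · exact hstbSY p hp q hq hpq
          · exact (hmark0 p hp).anti
          · exact ((hmark0 q hq).symm').anti
          · exact absurd rfl hpq
        calc T.weightF wv we S
            = T.weightF wv we SA + T.weightF wv we SY := hsplitw
          _ ≤ T.weightF wv we SY + T.alphaOn wv we A := by omega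
          _ = TB.weightF wv2 we2 (SY.image f ∪ {Sum.inr 0}) := hwblock.symm
          _ ≤ _ := TB.le_alphaOn wv2 we2 (fun p _ => Set.mem_univ p) hstb
      · -- SA empty, SB nonempty: marker 1
        have hSA0 : SA = ∅ := Finset.not_nonempty_iff_eq_empty.mp hSAne
        have hSeq2 : S = SB ∪ SY := by rw [hSeq, hSA0, Finset.empty_union]
        have hSYCF := hkeyB hSBne
        have hcross : ∀ u ∈ SB, ∀ v ∈ SY, T.SAnti u v :=
          fun u hu v hv => hBCF u (hSBm u hu).2 v (hSYCF v hv)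
        have hsplitw : T.weightF wv we S
            = T.weightF wv we SB + T.weightF wv we SY := by
          conv_lhs => rw [hSeq2]
          exact T.weightF_union wv we hsym SB SY hcross
        have hwB : T.weightF wv we SB ≤ T.alphaOn wv we B :=
          T.le_alphaOn wv we (fun v hv => (hSBm v (Finset.mem_coe.mp hv)).2)
            (fun u hu v hv hne => hst u (hSBm u hu).1 v (hSBm v hv).1 hne)
        have hmark1 : ∀ p ∈ SY.image f, TB.SAnti p (Sum.inr 1) := by
          intro p hp
          obtain ⟨v, hv, rfl⟩ := Finset.mem_image.mp hp
          rw [hfY v (hSYY v hv)]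
          exact ⟨Sum.inl_ne_inr, hθ1neg _ (hCF_DE v (hSYCF v hv))⟩
        have hwblock : TB.weightF wv2 we2 (SY.image f ∪ {Sum.inr 1})
            = T.weightF wv we SY + T.alphaOn wv we B := by
          rw [TB.weightF_union wv2 we2 (fun p q _ => hwe2sym p q) (SY.image f)
              {Sum.inr 1} (fun u hu v hv => by
                rw [Finset.mem_singleton] at hv
                subst hv
                exact hmark1 u hu),
            TB.weightF_singleton, hwSY, hwv2r1]
        have hstb : TB.StableF (SY.image f ∪ {Sum.inr 1}) := by
          intro p hp q hq hpq
          rw [Finset.mem_union, Finset.mem_singleton] at hp hq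
          rcases hp with hp | rfl <;> rcases hq with hq | rfl
          · exact hstbSY p hp q hq hpq
          · exact (hmark1 p hp).anti
          · exact ((hmark1 q hq).symm').anti
          · exact absurd rfl hpq
        calc T.weightF wv we S
            = T.weightF wv we SB + T.weightF wv we SY := hsplitw
          _ ≤ T.weightF wv we SY + T.alphaOn wv we B := by omega
          _ = TB.weightF wv2 we2 (SY.image f ∪ {Sum.inr 1}) := hwblock.symm
          _ ≤ _ := TB.le_alphaOn wv2 we2 (fun p _ => Set.mem_univ p) hstb
      · -- both empty: S = SY
        have hSA0 : SA = ∅ := Finset.not_nonempty_iff_eq_empty.mp hSAne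
        have hSB0 : SB = ∅ := Finset.not_nonempty_iff_eq_empty.mp hSBne
        have hSeq2 : S = SY := by
          rw [hSeq, hSA0, hSB0, Finset.union_empty, Finset.empty_union]
        calc T.weightF wv we S = T.weightF wv we SY := by rw [← hSeq2]
          _ = TB.weightF wv2 we2 (SY.image f) := hwSY.symm
          _ ≤ _ := TB.le_alphaOn wv2 we2 (fun p _ => Set.mem_univ p) hstbSY
    · -- α(TB) ≤ α(T)
      apply Trigraph.alphaOn_le
      intro S' _ hst'
      set SO := S'.filter (fun p => p ≠ Sum.inr 0 ∧ p ≠ Sum.inr 1) with hSOdef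
      have hSOm : ∀ p ∈ SO, p ∈ S' ∧ p ≠ Sum.inr 0 ∧ p ≠ Sum.inr 1 :=
        fun p hp => Finset.mem_filter.mp hp
      have hSOrep : ∀ p ∈ SO, ∃ u : ↥(A ∪ B)ᶜ, p = Sum.inl u := by
        intro p hp
        obtain ⟨-, hp0, hp1⟩ := hSOm p hp
        rcases p with u | i
        · exact ⟨u, rfl⟩
        · exfalso
          fin_cases i
          · exact hp0 rfl
          · exact hp1 rfl
      set SYV := SO.image g with hSYVdef
      have hwSO : T.weightF wv we SYV = TB.weightF wv2 we2 SO := by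
        apply Trigraph.weightF_image
        · intro p hp q hq hpq
          rw [Finset.mem_coe] at hp hq
          obtain ⟨u, rfl⟩ := hSOrep p hp
          obtain ⟨v, rfl⟩ := hSOrep q hq
          exact congrArg Sum.inl (Subtype.ext hpq)
        · intro p hp q hq _
          obtain ⟨u, rfl⟩ := hSOrep p hp
          obtain ⟨v, rfl⟩ := hSOrep q hq
          rfl
        · intro p hp
          obtain ⟨u, rfl⟩ := hSOrep p hp
          rfl
        · intro p hp q hq _
          obtain ⟨u, rfl⟩ := hSOrep p hp
          obtain ⟨v, rfl⟩ := hSOrep q hq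
          rfl
      have hSYVm : ∀ v ∈ SYV, ∃ u : ↥(A ∪ B)ᶜ, v = ↑u ∧ Sum.inl u ∈ SO := by
        intro v hv
        obtain ⟨p, hp, rfl⟩ := Finset.mem_image.mp hv
        obtain ⟨u, rfl⟩ := hSOrep p hp
        exact ⟨u, rfl, hp⟩
      have hstSYV : T.StableF SYV := by
        intro u hu v hv hne
        obtain ⟨a, rfl, haSO⟩ := hSYVm u hu
        obtain ⟨b, rfl, hbSO⟩ := hSYVm v hv
        have hab : (Sum.inl a : ↥(A ∪ B)ᶜ ⊕ Fin 2) ≠ Sum.inl b :=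
          fun h => hne (congrArg (Sum.elim Subtype.val (fun _ => hA.choose)) h)
        have := hst' _ (hSOm _ haSO).1 _ (hSOm _ hbSO).1 hab
        exact ⟨hne, this.2⟩
      by_cases hm0 : Sum.inr 0 ∈ S' <;> by_cases hm1 : Sum.inr 1 ∈ S'
      · -- both markers
        have hS'eq : S' = SO ∪ {Sum.inr 0, Sum.inr 1} := by
          ext p
          simp only [Finset.mem_union, Finset.mem_insert, Finset.mem_singleton,
            hSOdef, Finset.mem_filter]
          constructor
          · intro hp
            by_cases h0 : p = Sum.inr 0
            · exact Or.inr (Or.inl h0)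
            by_cases h1 : p = Sum.inr 1
            · exact Or.inr (Or.inr h1)
            · exact Or.inl ⟨hp, h0, h1⟩
          · rintro (⟨hp, -⟩ | rfl | rfl)
            · exact hp
            · exact hm0
            · exact hm1
        have hnotCE : ∀ (u : ↥(A ∪ B)ᶜ), Sum.inl u ∈ SO → (u : V) ∉ C ∪ E := by
          intro u hu hce
          have := hst' _ (hSOm _ hu).1 _ hm0 Sum.inl_ne_inr
          have h1 := hθ0pos u hce
          rcases this.2 with h | h <;> omega
        have hnotDE : ∀ (u : ↥(A ∪ B)ᶜ), Sum.inl u ∈ SO → (u : V) ∉ D ∪ E := by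
          intro u hu hde
          have := hst' _ (hSOm _ hu).1 _ hm1 Sum.inl_ne_inr
          have h1 := hθ1pos u hde
          rcases this.2 with h | h <;> omega
        have hSYVF : ∀ v ∈ SYV, v ∈ F := by
          intro v hv
          obtain ⟨u, rfl, huSO⟩ := hSYVm v hv
          exact hFonly _ (hYsplit _ u.2 (hnotCE u huSO)) (hYsplit' _ u.2 (hnotDE u huSO))
        have hmark : ∀ p ∈ SO, ∀ q ∈ ({Sum.inr 0, Sum.inr 1} :
            Finset (↥(A ∪ B)ᶜ ⊕ Fin 2)), TB.SAnti p q := by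
          intro p hp q hq
          obtain ⟨u, rfl⟩ := hSOrep p hp
          have huF : (u : V) ∈ F := hSYVF ↑u (Finset.mem_image.mpr ⟨_, hp, rfl⟩)
          rw [Finset.mem_insert, Finset.mem_singleton] at hq
          rcases hq with rfl | rfl
          · exact ⟨Sum.inl_ne_inr, hθ0neg u (hDF_CE _ (Or.inr huF))⟩
          · exact ⟨Sum.inl_ne_inr, hθ1neg u (hCF_DE _ (Or.inr huF))⟩
        have hwS' : TB.weightF wv2 we2 S'
            = TB.weightF wv2 we2 SO + T.alphaOn wv we (A ∪ B) := by
          conv_lhs => rw [hS'eq]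
          rw [TB.weightF_union wv2 we2 (fun p q _ => hwe2sym p q) SO _ hmark,
            TB.weightF_pair wv2 we2 hsw01 (hwe2sym (Sum.inr 0) (Sum.inr 1))]
        obtain ⟨SAB, hSABsub, hSABst, hSABw⟩ := T.exists_alphaOn wv we (A ∪ B)
        have hSABm : ∀ v ∈ SAB, v ∈ A ∪ B :=
          fun v hv => hSABsub (Finset.mem_coe.mpr hv)
        have hcross : ∀ u ∈ SYV, ∀ v ∈ SAB, T.SAnti u v := by
          intro u hu v hv
          have huF := hSYVF u hu
          rcases hSABm v hv with hvA | hvB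
          · exact (hADF v hvA u (Or.inr huF)).symm'
          · exact (hBCF v hvB u (Or.inr huF)).symm'
        have hwT : T.weightF wv we (SYV ∪ SAB)
            = TB.weightF wv2 we2 SO + T.alphaOn wv we (A ∪ B) := by
          rw [T.weightF_union wv we hsym SYV SAB hcross, hSABw, hwSO]
        have hstT : T.StableF (SYV ∪ SAB) := by
          intro u hu v hv hne
          rw [Finset.mem_union] at hu hv
          rcases hu with hu | hu <;> rcases hv with hv | hv
          · exact hstSYV u hu v hv hne
          · exact (hcross u hu v hv).anti
          · exact ((hcross v hv u hu).symm').anti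
          · exact hSABst u hu v hv hne
        calc TB.weightF wv2 we2 S'
            = T.weightF wv we (SYV ∪ SAB) := by rw [hwS', ← hwT]
          _ ≤ _ := T.le_alphaOn wv we (fun v _ => Set.mem_univ v) hstT
      · -- only marker 0
        have hS'eq : S' = SO ∪ {Sum.inr 0} := by
          ext p
          simp only [Finset.mem_union, Finset.mem_singleton, hSOdef, Finset.mem_filter]
          constructor
          · intro hp
            by_cases h0 : p = Sum.inr 0
            · exact Or.inr h0
            · refine Or.inl ⟨hp, h0, fun h1 => hm1 ?_⟩
              rw [← h1]
              exact hp
          · rintro (⟨hp, -⟩ | rfl)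
            · exact hp
            · exact hm0
        have hnotCE : ∀ (u : ↥(A ∪ B)ᶜ), Sum.inl u ∈ SO → (u : V) ∉ C ∪ E := by
          intro u hu hce
          have := hst' _ (hSOm _ hu).1 _ hm0 Sum.inl_ne_inr
          have h1 := hθ0pos u hce
          rcases this.2 with h | h <;> omega
        have hSYVDF : ∀ v ∈ SYV, v ∈ D ∪ F := by
          intro v hv
          obtain ⟨u, rfl, huSO⟩ := hSYVm v hv
          exact hYsplit _ u.2 (hnotCE u huSO)
        have hmark : ∀ p ∈ SO, ∀ q ∈ ({Sum.inr 0} : Finset (↥(A ∪ B)ᶜ ⊕ Fin 2)),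
            TB.SAnti p q := by
          intro p hp q hq
          obtain ⟨u, rfl⟩ := hSOrep p hp
          rw [Finset.mem_singleton] at hq
          subst hq
          exact ⟨Sum.inl_ne_inr,
            hθ0neg u (hDF_CE _ (hSYVDF ↑u (Finset.mem_image.mpr ⟨_, hp, rfl⟩)))⟩
        have hwS' : TB.weightF wv2 we2 S'
            = TB.weightF wv2 we2 SO + T.alphaOn wv we A := by
          conv_lhs => rw [hS'eq]
          rw [TB.weightF_union wv2 we2 (fun p q _ => hwe2sym p q) SO _ hmark,
            TB.weightF_singleton, hwv2r0]
        obtain ⟨SAs, hSAsub, hSAst, hSAw⟩ := T.exists_alphaOn wv we A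
        have hSAm2 : ∀ v ∈ SAs, v ∈ A := fun v hv => hSAsub (Finset.mem_coe.mpr hv)
        have hcross : ∀ u ∈ SYV, ∀ v ∈ SAs, T.SAnti u v := by
          intro u hu v hv
          exact (hADF v (hSAm2 v hv) u (hSYVDF u hu)).symm'
        have hwT : T.weightF wv we (SYV ∪ SAs)
            = TB.weightF wv2 we2 SO + T.alphaOn wv we A := by
          rw [T.weightF_union wv we hsym SYV SAs hcross, hSAw, hwSO]
        have hstT : T.StableF (SYV ∪ SAs) := by
          intro u hu v hv hne
          rw [Finset.mem_union] at hu hv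
          rcases hu with hu | hu <;> rcases hv with hv | hv
          · exact hstSYV u hu v hv hne
          · exact (hcross u hu v hv).anti
          · exact ((hcross v hv u hu).symm').anti
          · exact hSAst u hu v hv hne
        calc TB.weightF wv2 we2 S'
            = T.weightF wv we (SYV ∪ SAs) := by rw [hwS', ← hwT]
          _ ≤ _ := T.le_alphaOn wv we (fun v _ => Set.mem_univ v) hstT
      · -- only marker 1
        have hS'eq : S' = SO ∪ {Sum.inr 1} := by
          ext p
          simp only [Finset.mem_union, Finset.mem_singleton, hSOdef, Finset.mem_filter]
          constructor
          · intro hp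
            by_cases h1 : p = Sum.inr 1
            · exact Or.inr h1
            · refine Or.inl ⟨hp, fun h0 => hm0 ?_, h1⟩
              rw [← h0]
              exact hp
          · rintro (⟨hp, -⟩ | rfl)
            · exact hp
            · exact hm1
        have hnotDE : ∀ (u : ↥(A ∪ B)ᶜ), Sum.inl u ∈ SO → (u : V) ∉ D ∪ E := by
          intro u hu hde
          have := hst' _ (hSOm _ hu).1 _ hm1 Sum.inl_ne_inr
          have h1 := hθ1pos u hde
          rcases this.2 with h | h <;> omega
        have hSYVCF : ∀ v ∈ SYV, v ∈ C ∪ F := by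
          intro v hv
          obtain ⟨u, rfl, huSO⟩ := hSYVm v hv
          exact hYsplit' _ u.2 (hnotDE u huSO)
        have hmark : ∀ p ∈ SO, ∀ q ∈ ({Sum.inr 1} : Finset (↥(A ∪ B)ᶜ ⊕ Fin 2)),
            TB.SAnti p q := by
          intro p hp q hq
          obtain ⟨u, rfl⟩ := hSOrep p hp
          rw [Finset.mem_singleton] at hq
          subst hq
          exact ⟨Sum.inl_ne_inr,
            hθ1neg u (hCF_DE _ (hSYVCF ↑u (Finset.mem_image.mpr ⟨_, hp, rfl⟩)))⟩
        have hwS' : TB.weightF wv2 we2 S'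
            = TB.weightF wv2 we2 SO + T.alphaOn wv we B := by
          conv_lhs => rw [hS'eq]
          rw [TB.weightF_union wv2 we2 (fun p q _ => hwe2sym p q) SO _ hmark,
            TB.weightF_singleton, hwv2r1]
        obtain ⟨SBs, hSBsub, hSBst, hSBw⟩ := T.exists_alphaOn wv we B
        have hSBm2 : ∀ v ∈ SBs, v ∈ B := fun v hv => hSBsub (Finset.mem_coe.mpr hv)
        have hcross : ∀ u ∈ SYV, ∀ v ∈ SBs, T.SAnti u v := by
          intro u hu v hv
          exact (hBCF v (hSBm2 v hv) u (hSYVCF u hu)).symm'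
        have hwT : T.weightF wv we (SYV ∪ SBs)
            = TB.weightF wv2 we2 SO + T.alphaOn wv we B := by
          rw [T.weightF_union wv we hsym SYV SBs hcross, hSBw, hwSO]
        have hstT : T.StableF (SYV ∪ SBs) := by
          intro u hu v hv hne
          rw [Finset.mem_union] at hu hv
          rcases hu with hu | hu <;> rcases hv with hv | hv
          · exact hstSYV u hu v hv hne
          · exact (hcross u hu v hv).anti
          · exact ((hcross v hv u hu).symm').anti
          · exact hSBst u hu v hv hne
        calc TB.weightF wv2 we2 S'
            = T.weightF wv we (SYV ∪ SBs) := by rw [hwS', ← hwT]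
          _ ≤ _ := T.le_alphaOn wv we (fun v _ => Set.mem_univ v) hstT
      · -- no markers
        have hS'eq : S' = SO := by
          ext p
          simp only [hSOdef, Finset.mem_filter]
          refine ⟨fun hp => ⟨hp, fun h0 => hm0 (h0 ▸ hp), fun h1 => hm1 (h1 ▸ hp)⟩,
            fun hp => hp.1⟩
        calc TB.weightF wv2 we2 S' = TB.weightF wv2 we2 SO := by rw [← hS'eq]
          _ = T.weightF wv we SYV := hwSO.symm
          _ ≤ _ := T.le_alphaOn wv we (fun v _ => Set.mem_univ v) hstSYV
end

section
/- If (X,Y) is a decomposition of a trigraph T that contains no odd hole, then the corresponding blocks T_X and T_Y contain no odd hole. -/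
section AuxNoOddHole

open Trigraph

variable {V : Type*} {T : Trigraph V}

private lemma adj_symm' {u v : V} (h : T.Adj u v) : T.Adj v u :=
  ⟨h.1.symm, by rw [T.symm]; exact h.2⟩

private lemma anti_symm' {u v : V} (h : T.Anti u v) : T.Anti v u :=
  ⟨h.1.symm, by rw [T.symm]; exact h.2⟩

private lemma cons_ne' {k : ℕ} (hk : 2 ≤ k) {i j : Fin k}
    (hc : (i.val + 1) % k = j.val ∨ (j.val + 1) % k = i.val) : i ≠ j := by
  rintro rfl
  have hi := i.isLt
  have hc' : (i.val + 1) % k = i.val := by tauto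
  rcases Nat.lt_or_ge (i.val + 1) k with hlt | hge
  · rw [Nat.mod_eq_of_lt hlt] at hc'; omega
  · have hk1 : i.val + 1 = k := by omega
    rw [hk1, Nat.mod_self] at hc'; omega

private lemma cons_zmod {k : ℕ} (hk : 0 < k) (i j : Fin k) :
    (i.val + 1) % k = j.val ↔ ((i.val : ZMod k) + 1 = (j.val : ZMod k)) := by
  haveI : NeZero k := ⟨hk.ne'⟩
  constructor
  · intro hc
    have h1 : (((i.val + 1) % k : ℕ) : ZMod k) = ((j.val : ℕ) : ZMod k) := by rw [hc]
    rwa [ZMod.natCast_mod, Nat.cast_add, Nat.cast_one] at h1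
  · intro hz
    have h1 : ((i.val + 1 : ℕ) : ZMod k) = ((j.val : ℕ) : ZMod k) := by push_cast; exact hz
    have h2 := congrArg ZMod.val h1
    rwa [ZMod.val_natCast, ZMod.val_natCast, Nat.mod_eq_of_lt j.isLt] at h2

private lemma cons_zmod2 {k : ℕ} (hk : 0 < k) (i j : Fin k) :
    ((i.val + 1) % k = j.val ∨ (j.val + 1) % k = i.val) ↔
      (((i.val : ZMod k) + 1 = (j.val : ZMod k)) ∨ ((j.val : ZMod k) + 1 = (i.val : ZMod k))) :=
  or_congr (cons_zmod hk i j) (cons_zmod hk j i)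

private lemma zmod_cast_ne_zero {k : ℕ} [NeZero k] {n : ℕ} (h0 : 0 < n) (hnk : n < k) :
    ((n : ℕ) : ZMod k) ≠ 0 := by
  intro h
  have hd := (ZMod.natCast_eq_zero_iff n k).mp h
  have := Nat.le_of_dvd h0 hd
  omega

private lemma cyc_adj {k : ℕ} (hk : 5 ≤ k) (a b : ZMod k)
    (H : ∀ z : ZMod k, z ≠ a → z ≠ b →
      ((z + 1 = a ∨ a + 1 = z) ↔ ¬(z + 1 = b ∨ b + 1 = z)))
    (hb : b = a + 1) : False := by
  haveI : NeZero k := ⟨by omega⟩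
  have h1 : ((1 : ℕ) : ZMod k) ≠ 0 := zmod_cast_ne_zero (by norm_num) (by omega)
  have h2 : ((2 : ℕ) : ZMod k) ≠ 0 := zmod_cast_ne_zero (by norm_num) (by omega)
  have h3 : ((3 : ℕ) : ZMod k) ≠ 0 := zmod_cast_ne_zero (by norm_num) (by omega)
  have h4 : ((4 : ℕ) : ZMod k) ≠ 0 := zmod_cast_ne_zero (by norm_num) (by omega)
  subst hb
  have hz := H (a + 3) (fun he => h3 (by push_cast; linear_combination he))
    (fun he => h2 (by push_cast; linear_combination he))
  have hR : a + 3 + 1 = a + 1 ∨ a + 1 + 1 = a + 3 := by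
    by_contra hR
    rcases hz.mpr hR with he | he
    · exact h4 (by push_cast; linear_combination he)
    · exact h2 (by push_cast; linear_combination -he)
  rcases hR with he | he
  · exact h3 (by push_cast; linear_combination he)
  · exact h1 (by push_cast; linear_combination -he)

private lemma cyc {k : ℕ} (hk : 5 ≤ k) (hodd : Odd k) (a b : ZMod k) (hab : a ≠ b)
    (H : ∀ z : ZMod k, z ≠ a → z ≠ b →
      ((z + 1 = a ∨ a + 1 = z) ↔ ¬(z + 1 = b ∨ b + 1 = z))) : False := by
  haveI : NeZero k := ⟨by omega⟩
  have h1 : ((1 : ℕ) : ZMod k) ≠ 0 := zmod_cast_ne_zero (by norm_num) (by omega)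
  have h2 : ((2 : ℕ) : ZMod k) ≠ 0 := zmod_cast_ne_zero (by norm_num) (by omega)
  have h3 : ((3 : ℕ) : ZMod k) ≠ 0 := zmod_cast_ne_zero (by norm_num) (by omega)
  have h4 : ((4 : ℕ) : ZMod k) ≠ 0 := zmod_cast_ne_zero (by norm_num) (by omega)
  have H' : ∀ z : ZMod k, z ≠ b → z ≠ a →
      ((z + 1 = b ∨ b + 1 = z) ↔ ¬(z + 1 = a ∨ a + 1 = z)) := by
    intro z hzb hza
    have := H z hza hzb
    tauto
  have hba1 : b ≠ a + 1 := fun hx => cyc_adj hk a b H hx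
  have hab1 : a ≠ b + 1 := fun hx => cyc_adj hk b a H' hx
  -- z = a + 1
  have e1 := H (a + 1) (fun he => h1 (by push_cast; linear_combination he))
    (fun he => hba1 he.symm)
  have hb2 : ¬(a + 1 + 1 = b ∨ b + 1 = a + 1) := e1.mp (Or.inr rfl)
  push_neg at hb2
  -- z = a + 2
  have e2 := H (a + 2) (fun he => h2 (by push_cast; linear_combination he))
    (fun he => hb2.1 (by linear_combination he))
  have hR2 : a + 2 + 1 = b ∨ b + 1 = a + 2 := by
    by_contra hR
    rcases e2.mpr hR with he | he
    · exact h3 (by push_cast; linear_combination he)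
    · exact h1 (by push_cast; linear_combination -he)
  have hb3 : b = a + 3 := by
    rcases hR2 with he | he
    · linear_combination -he
    · exact absurd (by linear_combination he : b = a + 1) hba1
  subst hb3
  -- z = a - 1
  have e3 := H (a - 1) (fun he => h1 (by push_cast; linear_combination -he))
    (fun he => h4 (by push_cast; linear_combination -he))
  have hb4 : ¬(a - 1 + 1 = a + 3 ∨ a + 3 + 1 = a - 1) := e3.mp (Or.inl (by ring))
  push_neg at hb4
  have h5 : ((5 : ℕ) : ZMod k) ≠ 0 := fun hx => hb4.2 (by push_cast at hx; linear_combination hx)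
  -- z = a - 2
  have e4 := H (a - 2) (fun he => h2 (by push_cast; linear_combination -he))
    (fun he => h5 (by push_cast; linear_combination -he))
  have hR4 : a - 2 + 1 = a + 3 ∨ a + 3 + 1 = a - 2 := by
    by_contra hR
    rcases e4.mpr hR with he | he
    · exact h1 (by push_cast; linear_combination -he)
    · exact h3 (by push_cast; linear_combination he)
  rcases hR4 with he | he
  · exact h4 (by push_cast; linear_combination -he)
  · have h6 : ((6 : ℕ) : ZMod k) = 0 := by push_cast; linear_combination he
    have hd := (ZMod.natCast_eq_zero_iff 6 k).mp h6
    have hk6 : k ≤ 6 := Nat.le_of_dvd (by norm_num) hd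
    have hk56 : k = 5 ∨ k = 6 := by omega
    rcases hk56 with rfl | rfl
    · norm_num at hd
    · exact (by decide : ¬ Odd 6) hodd

end AuxNoOddHole

section AuxNoOddHole2

open Trigraph

variable {V : Type*} {T : Trigraph V}

private def pattern (T : Trigraph V) (X P : Set V) (p : V) : Prop :=
  p ∉ X ∧ ∀ x ∈ X, (x ∈ P → T.θ p x = 1) ∧ (x ∉ P → T.θ p x = -1)

open Classical in
private lemma augment2_θ_inl_inr (T : Trigraph V) (X P Q : Set V) (x : ↥X) (t : Fin 2) :
    (T.augment2 X P Q).θ (Sum.inl x) (Sum.inr t) =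
      if (t = 0 ∧ (x : V) ∈ P) ∨ (t = 1 ∧ (x : V) ∈ Q) then 1 else -1 := rfl

private lemma augment2_θ_inl_inl (T : Trigraph V) (X P Q : Set V) (x y : ↥X) :
    (T.augment2 X P Q).θ (Sum.inl x) (Sum.inl y) = T.θ x y := rfl

private lemma augment2_adj_inl_inr {X P Q : Set V} {x : ↥X} {t : Fin 2}
    (h : (T.augment2 X P Q).Adj (Sum.inl x) (Sum.inr t)) :
    (t = 0 ∧ (x : V) ∈ P) ∨ (t = 1 ∧ (x : V) ∈ Q) := by
  obtain ⟨-, hθ⟩ := h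
  rw [augment2_θ_inl_inr] at hθ
  split_ifs at hθ with hcnd
  · exact hcnd
  · rcases hθ with h' | h' <;> norm_num at h'

private lemma augment2_anti_inl_inr {X P Q : Set V} {x : ↥X} {t : Fin 2}
    (h : (T.augment2 X P Q).Anti (Sum.inl x) (Sum.inr t)) :
    ¬((t = 0 ∧ (x : V) ∈ P) ∨ (t = 1 ∧ (x : V) ∈ Q)) := by
  obtain ⟨-, hθ⟩ := h
  rw [augment2_θ_inl_inr] at hθ
  split_ifs at hθ with hcnd
  · rcases hθ with h' | h' <;> norm_num at h'
  · exact hcnd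

private lemma induce_no_odd {X : Set V} (hT : ¬ T.HasOddHole) :
    ¬ (T.induce X).HasOddHole := by
  rintro ⟨k, hodd, h, hk4, hinj, hcond⟩
  refine hT ⟨k, hodd, fun i => ↑(h i), hk4, fun i j e => hinj (Subtype.ext e), ?_⟩
  intro i j
  constructor
  · intro hc
    obtain ⟨hne', hθ⟩ := (hcond i j).1 hc
    exact ⟨fun e => hne' (Subtype.ext e), hθ⟩
  · intro hne hnc
    obtain ⟨hne', hθ⟩ := (hcond i j).2 hne hnc
    exact ⟨fun e => hne' (Subtype.ext e), hθ⟩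

private lemma hole_lift {X P Q : Set V} {k : ℕ} {h : Fin k → ↥X ⊕ Fin 2}
    (hh : (T.augment2 X P Q).IsHole k h) {p q : V}
    (hp : pattern T X P p) (hq : pattern T X Q q)
    (hpq : ∀ i j : Fin k, h i = Sum.inr 0 → h j = Sum.inr 1 →
      (((i.val + 1) % k = j.val ∨ (j.val + 1) % k = i.val) → T.Adj p q) ∧
      (¬((i.val + 1) % k = j.val ∨ (j.val + 1) % k = i.val) → T.Anti p q)) :
    ∃ f : Fin k → V, T.IsHole k f := by
  classical
  obtain ⟨hk4, hinj, hcond⟩ := hh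
  set r : Fin 2 → V := fun t => if t = 0 then p else q with hr
  set S : Fin 2 → Set V := fun t => if t = 0 then P else Q with hS
  have hrX : ∀ t, r t ∉ X := by
    intro t; fin_cases t
    · simpa [r] using hp.1
    · simpa [r] using hq.1
  have hrθ : ∀ (t : Fin 2) (x : V), x ∈ X →
      (x ∈ S t → T.θ (r t) x = 1) ∧ (x ∉ S t → T.θ (r t) x = -1) := by
    intro t x hx; fin_cases t
    · simpa [r, S] using hp.2 x hx
    · simpa [r, S] using hq.2 x hx
  have memOfAdj : ∀ (x : ↥X) (t : Fin 2),
      (T.augment2 X P Q).Adj (Sum.inl x) (Sum.inr t) → (x : V) ∈ S t := by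
    intro x t hA
    rcases augment2_adj_inl_inr hA with ⟨rfl, hm⟩ | ⟨rfl, hm⟩ <;> simpa [S] using hm
  have notMemOfAnti : ∀ (x : ↥X) (t : Fin 2),
      (T.augment2 X P Q).Anti (Sum.inl x) (Sum.inr t) → (x : V) ∉ S t := by
    intro x t hA hm
    apply augment2_anti_inl_inr hA
    fin_cases t
    · exact Or.inl ⟨rfl, by simpa [S] using hm⟩
    · exact Or.inr ⟨rfl, by simpa [S] using hm⟩
  -- p ≠ q when both markers occur
  have hpqne : ∀ i j : Fin k, h i = Sum.inr 0 → h j = Sum.inr 1 → p ≠ q := by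
    intro i j hi hj
    by_cases hcs : (i.val + 1) % k = j.val ∨ (j.val + 1) % k = i.val
    · exact ((hpq i j hi hj).1 hcs).1
    · exact ((hpq i j hi hj).2 hcs).1
  refine ⟨fun i => Sum.elim (fun x : ↥X => (x : V)) r (h i), hk4, ?_, ?_⟩
  · -- injectivity
    intro i j he
    rcases hzi : h i with x | t <;> rcases hzj : h j with y | s <;>
      simp only [hzi, hzj, Sum.elim_inl, Sum.elim_inr] at he
    · exact hinj (by rw [hzi, hzj, Subtype.ext he])
    · exact absurd (he ▸ x.2) (hrX s)
    · exact absurd (he ▸ y.2) (hrX t)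
    · by_cases hts : t = s
      · exact hinj (by rw [hzi, hzj, hts])
      · exfalso
        fin_cases t <;> fin_cases s
        · exact hts rfl
        · exact hpqne i j hzi hzj (by simpa [r] using he)
        · exact hpqne j i hzj hzi (by simpa [r] using he.symm)
        · exact hts rfl
  · intro i j
    constructor
    · intro hc
      have hij : i ≠ j := cons_ne' (by omega) hc
      have hW := (hcond i j).1 hc
      rcases hzi : h i with x | t <;> rcases hzj : h j with y | s <;>
        rw [hzi, hzj] at hW <;>
        simp only [hzi, hzj, Sum.elim_inl, Sum.elim_inr]
      · exact ⟨fun e => hW.1 (by rw [Subtype.ext e]), hW.2⟩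
      · have hmem := memOfAdj x s hW
        exact ⟨fun e => hrX s (e ▸ x.2), Or.inr (by rw [T.symm]; exact (hrθ s x x.2).1 hmem)⟩
      · have hmem := memOfAdj y t (adj_symm' hW)
        exact ⟨fun e => hrX t (e.symm ▸ y.2), Or.inr ((hrθ t y y.2).1 hmem)⟩
      · have hts : t ≠ s := by
          rintro rfl; exact hij (hinj (hzi.trans hzj.symm))
        fin_cases t <;> fin_cases s
        · exact absurd rfl hts
        · simpa [r] using (hpq i j hzi hzj).1 hc
        · simpa [r] using adj_symm' ((hpq j i hzj hzi).1 hc.symm)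
        · exact absurd rfl hts
    · intro hij hnc
      have hW := (hcond i j).2 hij hnc
      rcases hzi : h i with x | t <;> rcases hzj : h j with y | s <;>
        rw [hzi, hzj] at hW <;>
        simp only [hzi, hzj, Sum.elim_inl, Sum.elim_inr]
      · exact ⟨fun e => hW.1 (by rw [Subtype.ext e]), hW.2⟩
      · have hmem := notMemOfAnti x s hW
        exact ⟨fun e => hrX s (e ▸ x.2), Or.inl (by rw [T.symm]; exact (hrθ s x x.2).2 hmem)⟩
      · have hmem := notMemOfAnti y t (anti_symm' hW)
        exact ⟨fun e => hrX t (e.symm ▸ y.2), Or.inl ((hrθ t y y.2).2 hmem)⟩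
      · have hts : t ≠ s := by
          rintro rfl; exact hij (hinj (hzi.trans hzj.symm))
        fin_cases t <;> fin_cases s
        · exact absurd rfl hts
        · simpa [r] using (hpq i j hzi hzj).2 hnc
        · simpa [r] using anti_symm' ((hpq j i hzj hzi).2 (fun hcc => hnc hcc.symm))
        · exact absurd rfl hts

end AuxNoOddHole2

section AuxNoOddHole3

open Trigraph

variable {V : Type*} {T : Trigraph V}

private lemma split_pairs {A B C D E F : Set V} (hs : T.IsSplit A B C D E F) :
    (∃ v ∈ A, ∃ w ∈ B, T.Adj v w) ∧ (∃ v ∈ A, ∃ w ∈ B, T.Anti v w) := by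
  obtain ⟨-, -, hAB, -, -, -, -, -, -, -, -, -, -, -, hnc, hna, -, -⟩ := hs
  have hne : ∀ v ∈ A, ∀ w ∈ B, v ≠ w := fun v hv w hw e =>
    Set.disjoint_left.mp hAB hv (e ▸ hw)
  constructor
  · by_contra hcon; push_neg at hcon
    apply hna; intro s hs' a ha'
    have h' := hne s hs' a ha'
    rcases T.range s a h' with hr | hr | hr
    · exact ⟨h', hr⟩
    · exact absurd ⟨h', Or.inl hr⟩ (hcon s hs' a ha')
    · exact absurd ⟨h', Or.inr hr⟩ (hcon s hs' a ha')
  · by_contra hcon; push_neg at hcon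
    apply hnc; intro s hs' a ha'
    have h' := hne s hs' a ha'
    rcases T.range s a h' with hr | hr | hr
    · exact absurd ⟨h', Or.inl hr⟩ (hcon s hs' a ha')
    · exact absurd ⟨h', Or.inr hr⟩ (hcon s hs' a ha')
    · exact ⟨h', hr⟩

private lemma split_patternA {A B C D E F : Set V} (hs : T.IsSplit A B C D E F)
    {v : V} (hv : v ∈ A) : pattern T (A ∪ B)ᶜ (C ∪ E) v := by
  obtain ⟨-, -, -, -, -, -, -, -, -, hU, hAC, hAD, -, -, -, -, -, -⟩ := hs
  refine ⟨fun hvc => hvc (Or.inl hv), fun x hx => ⟨fun hxCE => (hAC v hv x hxCE).2, fun hxn => ?_⟩⟩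
  have hx' : x ∈ C ∪ D ∪ E ∪ F := hU ▸ hx
  have hDF : x ∈ D ∪ F := by
    rcases hx' with ((hc | hd) | he) | hf
    · exact absurd (Or.inl hc) hxn
    · exact Or.inl hd
    · exact absurd (Or.inr he) hxn
    · exact Or.inr hf
  exact (hAD v hv x hDF).2

private lemma split_patternB {A B C D E F : Set V} (hs : T.IsSplit A B C D E F)
    {w : V} (hw : w ∈ B) : pattern T (A ∪ B)ᶜ (D ∪ E) w := by
  obtain ⟨-, -, -, -, -, -, -, -, -, hU, -, -, hBD, hBC, -, -, -, -⟩ := hs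
  refine ⟨fun hwc => hwc (Or.inr hw), fun x hx => ⟨fun hxDE => (hBD w hw x hxDE).2, fun hxn => ?_⟩⟩
  have hx' : x ∈ C ∪ D ∪ E ∪ F := hU ▸ hx
  have hCF : x ∈ C ∪ F := by
    rcases hx' with ((hc | hd) | he) | hf
    · exact Or.inl hc
    · exact absurd (Or.inl hd) hxn
    · exact absurd (Or.inr he) hxn
    · exact Or.inr hf
  exact (hBC w hw x hCF).2

private lemma blockY_no_odd {A B C D E F : Set V} (hT : ¬ T.HasOddHole)
    (hs : T.IsSplit A B C D E F) : ¬ (T.blockYPair A B C D E).HasOddHole := by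
  rintro ⟨k, hodd, h, hh⟩
  have hh' : (T.augment2 (A ∪ B)ᶜ (C ∪ E) (D ∪ E)).IsHole k h := hh
  obtain ⟨⟨v1, hv1, w1, hw1, hvw1⟩, ⟨v2, hv2, w2, hw2, hvw2⟩⟩ := split_pairs hs
  have hinj := hh'.2.1
  by_cases hcc : ∃ i j : Fin k, h i = Sum.inr 0 ∧ h j = Sum.inr 1 ∧
      ((i.val + 1) % k = j.val ∨ (j.val + 1) % k = i.val)
  · obtain ⟨i, j, hi, hj, hcij⟩ := hcc
    have hside : ∀ i' j' : Fin k, h i' = Sum.inr 0 → h j' = Sum.inr 1 →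
        (((i'.val + 1) % k = j'.val ∨ (j'.val + 1) % k = i'.val) → T.Adj v1 w1) ∧
        (¬((i'.val + 1) % k = j'.val ∨ (j'.val + 1) % k = i'.val) → T.Anti v1 w1) := by
      intro i' j' hi' hj'
      have e1 : i' = i := hinj (hi'.trans hi.symm)
      have e2 : j' = j := hinj (hj'.trans hj.symm)
      subst e1; subst e2
      exact ⟨fun _ => hvw1, fun hn => absurd hcij hn⟩
    obtain ⟨f, hf⟩ := hole_lift hh' (split_patternA hs hv1) (split_patternB hs hw1) hside
    exact hT ⟨k, hodd, f, hf⟩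
  · have hside : ∀ i j : Fin k, h i = Sum.inr 0 → h j = Sum.inr 1 →
        (((i.val + 1) % k = j.val ∨ (j.val + 1) % k = i.val) → T.Adj v2 w2) ∧
        (¬((i.val + 1) % k = j.val ∨ (j.val + 1) % k = i.val) → T.Anti v2 w2) := by
      intro i j hi hj
      exact ⟨fun hcij => absurd ⟨i, j, hi, hj, hcij⟩ hcc, fun _ => hvw2⟩
    obtain ⟨f, hf⟩ := hole_lift hh' (split_patternA hs hv2) (split_patternB hs hw2) hside
    exact hT ⟨k, hodd, f, hf⟩

private lemma blockX_no_odd {A B C D E F : Set V} (hT : ¬ T.HasOddHole)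
    (hs : T.IsSplit A B C D E F) (hC : C.Nonempty) (hD : D.Nonempty) :
    ¬ (T.blockXPair A B).HasOddHole := by
  rintro ⟨k, hodd, h, hh⟩
  have hh' : (T.augment2 (A ∪ B) A B).IsHole k h := hh
  obtain ⟨c0, hc0⟩ := hC
  obtain ⟨d0, hd0⟩ := hD
  obtain ⟨hA, hB, hAB, -, -, -, -, -, -, hU, hAC, hAD, hBD, hBC, -, -, -, -⟩ := hs
  have hc0' : c0 ∉ A ∪ B := by
    have hc1 : c0 ∈ C ∪ D ∪ E ∪ F := Or.inl (Or.inl (Or.inl hc0))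
    rw [hU] at hc1; exact hc1
  have hd0' : d0 ∉ A ∪ B := by
    have hd1 : d0 ∈ C ∪ D ∪ E ∪ F := Or.inl (Or.inl (Or.inr hd0))
    rw [hU] at hd1; exact hd1
  have pc : pattern T (A ∪ B) A c0 := by
    refine ⟨hc0', fun x hx => ⟨fun hxA => ?_, fun hxA => ?_⟩⟩
    · have := (hAC x hxA c0 (Or.inl hc0)).2; rw [T.symm]; exact this
    · have hxB : x ∈ B := hx.resolve_left hxA
      have := (hBC x hxB c0 (Or.inl hc0)).2; rw [T.symm]; exact this
  have pd : pattern T (A ∪ B) B d0 := by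
    refine ⟨hd0', fun x hx => ⟨fun hxB => ?_, fun hxB => ?_⟩⟩
    · have := (hBD x hxB d0 (Or.inl hd0)).2; rw [T.symm]; exact this
    · have hxA : x ∈ A := hx.resolve_right hxB
      have := (hAD x hxA d0 (Or.inl hd0)).2; rw [T.symm]; exact this
  have hk4 := hh'.1
  have hinj := hh'.2.1
  have hcond := hh'.2.2
  have hk5 : 5 ≤ k := by obtain ⟨m, hm⟩ := hodd; omega
  have hk0 : 0 < k := by omega
  haveI : NeZero k := ⟨by omega⟩
  have hside : ∀ i j : Fin k, h i = Sum.inr 0 → h j = Sum.inr 1 →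
      (((i.val + 1) % k = j.val ∨ (j.val + 1) % k = i.val) → T.Adj c0 d0) ∧
      (¬((i.val + 1) % k = j.val ∨ (j.val + 1) % k = i.val) → T.Anti c0 d0) := by
    intro i j hi hj
    exfalso
    have hij : i ≠ j := by
      intro e; rw [e, hj] at hi
      exact (by decide : (1 : Fin 2) ≠ 0) (Sum.inr.inj hi)
    refine cyc hk5 hodd (i.val : ZMod k) (j.val : ZMod k) ?_ ?_
    · intro e
      have := congrArg ZMod.val e
      rw [ZMod.val_natCast, ZMod.val_natCast, Nat.mod_eq_of_lt i.isLt,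
        Nat.mod_eq_of_lt j.isLt] at this
      exact hij (Fin.ext this)
    intro z hza hzb
    set zf : Fin k := ⟨z.val, ZMod.val_lt z⟩ with hzf
    have hzcast : ((zf.val : ℕ) : ZMod k) = z := ZMod.natCast_zmod_val z
    have hzfi : zf ≠ i := by
      intro e
      apply hza
      rw [← hzcast, congrArg Fin.val e]
    have hzfj : zf ≠ j := by
      intro e
      apply hzb
      rw [← hzcast, congrArg Fin.val e]
    rcases hz : h zf with x | t
    · have hxAB : (x : V) ∈ A ∪ B := x.2
      have e0 : ((zf.val + 1) % k = i.val ∨ (i.val + 1) % k = zf.val) ↔ (x : V) ∈ A := by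
        constructor
        · intro hcn
          have hW := (hcond zf i).1 hcn
          rw [hz, hi] at hW
          rcases augment2_adj_inl_inr hW with ⟨-, hm⟩ | ⟨h01, -⟩
          · exact hm
          · exact absurd h01 (by decide)
        · intro hxA
          by_contra hcn
          have hW := (hcond zf i).2 hzfi hcn
          rw [hz, hi] at hW
          exact augment2_anti_inl_inr hW (Or.inl ⟨rfl, hxA⟩)
      have e1 : ((zf.val + 1) % k = j.val ∨ (j.val + 1) % k = zf.val) ↔ (x : V) ∈ B := by
        constructor
        · intro hcn
          have hW := (hcond zf j).1 hcn
          rw [hz, hj] at hW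
          rcases augment2_adj_inl_inr hW with ⟨h10, -⟩ | ⟨-, hm⟩
          · exact absurd h10 (by decide)
          · exact hm
        · intro hxB
          by_contra hcn
          have hW := (hcond zf j).2 hzfj hcn
          rw [hz, hj] at hW
          exact augment2_anti_inl_inr hW (Or.inr ⟨rfl, hxB⟩)
      rw [← hzcast, ← cons_zmod2 hk0 zf i, ← cons_zmod2 hk0 zf j, e0, e1]
      constructor
      · intro hxA hxB
        exact Set.disjoint_left.mp hAB hxA hxB
      · intro hnB
        exact hxAB.resolve_right hnB
    · exfalso
      fin_cases t
      · exact hzfi (hinj (hz.trans hi.symm))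
      · exact hzfj (hinj (hz.trans hj.symm))

  obtain ⟨f, hf⟩ := hole_lift hh' pc pd hside
  exact hT ⟨k, hodd, f, hf⟩

end AuxNoOddHole3


/-- If `(X, Y)` is a decomposition of a trigraph `T` that contains no odd hole, then the
corresponding blocks `T_X` and `T_Y` contain no odd hole (all three kinds of decompositions
and corresponding blocks are treated). -/
theorem blocks_no_odd_hole {V : Type} [Fintype V] [DecidableEq V] (T : Trigraph V)
    (hT : ¬ T.HasOddHole) :
    (∀ X : Set V, T.HomSet X →
      ¬ (T.induce X).HasOddHole ∧
      ∀ x ∈ X, ¬ (T.induce (Xᶜ ∪ {x})).HasOddHole) ∧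
    (∀ A B C D E F : Set V, T.IsSplit A B C D E F → (A ∪ B).ncard ≤ 6 →
      ¬ (T.induce (A ∪ B)).HasOddHole ∧ ¬ (T.blockYPair A B C D E).HasOddHole) ∧
    (∀ A B C D E F : Set V, T.IsSplit A B C D E F → C.Nonempty → D.Nonempty →
      ¬ (T.blockXPair A B).HasOddHole ∧ ¬ (T.blockYPair A B C D E).HasOddHole) := by
  refine ⟨fun X _ => ⟨induce_no_odd hT, fun x _ => induce_no_odd hT⟩,
    fun A B C D E F hs _ => ⟨induce_no_odd hT, blockY_no_odd hT hs⟩,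
    fun A B C D E F hs hC hD => ⟨blockX_no_odd hT hs hC hD, blockY_no_odd hT hs⟩⟩
end

section
/- If T is a trigraph in the class T1, then T does not contain an antihole of length at least 7. -/
/-- A trigraph in the class `𝒯₁` contains no antihole of length at least 7. -/
theorem inT1_no_long_antihole {V : Type} [Fintype V] (T : Trigraph V) (hT : T.InT1) :
    ∀ k : ℕ, 7 ≤ k → ∀ h : Fin k → V, ¬ T.compl.IsHole k h := by
  classical
  intro k hk h hhole
  obtain ⟨hmono, X, t, K, hcover, hdisjX, hdisjK, htf, hclq, hacK, hnbhd⟩ := hT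
  obtain ⟨hk4, hinj, hadj⟩ := hhole
  haveI : NeZero k := ⟨by omega⟩
  haveI : Fact (1 < k) := ⟨by omega⟩
  -- nonzero small constants in ZMod k
  have hz : ∀ d : ℕ, 0 < d → d < 7 → ((d : ℕ) : ZMod k) ≠ 0 := by
    intro d h1 h2 hcast
    have := (ZMod.natCast_eq_zero_iff d k).mp hcast
    have := Nat.le_of_dvd h1 this
    omega
  have z1 : (1 : ZMod k) ≠ 0 := by have := hz 1 (by norm_num) (by norm_num); push_cast at this; exact this
  have z2 : (2 : ZMod k) ≠ 0 := by have := hz 2 (by norm_num) (by norm_num); push_cast at this; exact this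
  have z3 : (3 : ZMod k) ≠ 0 := by have := hz 3 (by norm_num) (by norm_num); push_cast at this; exact this
  have z4 : (4 : ZMod k) ≠ 0 := by have := hz 4 (by norm_num) (by norm_num); push_cast at this; exact this
  have z5 : (5 : ZMod k) ≠ 0 := by have := hz 5 (by norm_num) (by norm_num); push_cast at this; exact this
  have z6 : (6 : ZMod k) ≠ 0 := by have := hz 6 (by norm_num) (by norm_num); push_cast at this; exact this
  -- the bridge between `ZMod k` and `Fin k`
  set F : ZMod k → Fin k := fun a => ⟨a.val, ZMod.val_lt a⟩ with hF
  set g : ZMod k → V := fun a => h (F a) with hg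
  set consZ : ZMod k → ZMod k → Prop := fun a b => b = a + 1 ∨ a = b + 1 with hconsZdef
  have hvalinj : ∀ a b : ZMod k, a.val = b.val → a = b := fun a b hab =>
    ZMod.val_injective k hab
  have hFinj : ∀ a b : ZMod k, F a = F b → a = b := by
    intro a b hab
    exact hvalinj a b (congrArg Fin.val hab)
  have hFadd : ∀ a : ZMod k, (a.val + 1) % k = (a + 1).val := by
    intro a
    rw [ZMod.val_add, ZMod.val_one]
  have hconsF : ∀ a b : ZMod k,
      (((F a).val + 1) % k = (F b).val ∨ ((F b).val + 1) % k = (F a).val) ↔ consZ a b := by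
    intro a b
    have hFval : ∀ c : ZMod k, (F c).val = c.val := by intro c; rw [hF]
    constructor
    · rintro (hh | hh)
      · left; refine (hvalinj _ _ ?_).symm
        rw [← hFadd, ← hFval a, ← hFval b]; exact hh
      · right; refine (hvalinj _ _ ?_).symm
        rw [← hFadd, ← hFval b, ← hFval a]; exact hh
    · rintro (rfl | rfl)
      · left; rw [hFval, hFval]; exact hFadd a
      · right; rw [hFval, hFval]; exact hFadd b
  have ginj : ∀ a b : ZMod k, g a = g b → a = b := by
    intro a b hab
    exact hFinj a b (hinj hab)
  have hAntiZ : ∀ a b : ZMod k, consZ a b → T.Anti (g a) (g b) := by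
    intro a b hc
    have h2 := (hadj (F a) (F b)).1 ((hconsF a b).mpr hc)
    obtain ⟨hne, hor⟩ := h2
    refine ⟨hne, ?_⟩
    have hcompl : T.compl.θ (h (F a)) (h (F b)) = -(T.θ (h (F a)) (h (F b))) := rfl
    rw [hcompl] at hor
    show T.θ (h (F a)) (h (F b)) = -1 ∨ T.θ (h (F a)) (h (F b)) = 0
    omega
  have hAdjZ : ∀ a b : ZMod k, a ≠ b → ¬ consZ a b → T.Adj (g a) (g b) := by
    intro a b hab hnc
    have hFne : F a ≠ F b := fun e => hab (hFinj a b e)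
    have h2 := (hadj (F a) (F b)).2 hFne (fun hcons => hnc ((hconsF a b).mp hcons))
    obtain ⟨hne, hor⟩ := h2
    refine ⟨hne, ?_⟩
    have hcompl : T.compl.θ (h (F a)) (h (F b)) = -(T.θ (h (F a)) (h (F b))) := rfl
    rw [hcompl] at hor
    show T.θ (h (F a)) (h (F b)) = 0 ∨ T.θ (h (F a)) (h (F b)) = 1
    omega
  have consZ_ne : ∀ a b : ZMod k, consZ a b → a ≠ b := by
    rintro a b (rfl | rfl) e
    · exact z1 (by first | linear_combination e | linear_combination -e)
    · exact z1 (by first | linear_combination e | linear_combination -e)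
  -- basic contradictions
  have hAE : ∀ u v : V, T.SAnti u v → T.Adj u v → False := by
    rintro u v ⟨-, h1⟩ ⟨-, h2⟩
    omega
  have hEA : ∀ u v : V, T.SEdge u v → T.Anti u v → False := by
    rintro u v ⟨-, h1⟩ ⟨-, h2⟩
    omega
  have antisym : ∀ u v : V, T.Anti u v → T.Anti v u := by
    rintro u v ⟨hne, h1⟩
    exact ⟨hne.symm, by rw [T.symm]; exact h1⟩
  -- locating vertices
  have hloc : ∀ a : ZMod k, g a ∉ X → ∃ p, g a ∈ K p := by
    intro a ha
    have : g a ∈ X ∪ ⋃ i, K i := by rw [hcover]; exact Set.mem_univ _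
    rcases this with h' | h'
    · exact absurd h' ha
    · exact Set.mem_iUnion.mp h'
  -- Lemma A': nonconsecutive clique vertices lie in the same clique
  have lemA : ∀ (a b : ZMod k) (p q : Fin t), a ≠ b → ¬ consZ a b →
      g a ∈ K p → g b ∈ K q → p = q := by
    intro a b p q hab hnc hpa hqb
    by_contra hpq
    exact hAE _ _ (hacK p q hpq (g a) hpa (g b) hqb) (hAdjZ a b hab hnc)
  -- Lemma B': consecutive vertices cannot lie in the same clique
  have lemB : ∀ (a b : ZMod k) (p : Fin t), consZ a b → g a ∈ K p → g b ∈ K p → False := by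
    intro a b p hc hpa hpb
    have hne : g a ≠ g b := fun e => consZ_ne a b hc (ginj a b e)
    exact hEA _ _ (hclq p hpa hpb hne) (hAntiZ a b hc)
  -- Lemma C': no three pairwise nonconsecutive vertices in X
  have lemC : ∀ a b c : ZMod k, a ≠ b → a ≠ c → b ≠ c →
      ¬ consZ a b → ¬ consZ a c → ¬ consZ b c →
      g a ∈ X → g b ∈ X → g c ∈ X → False := by
    intro a b c hab hac hbc nab nac nbc hxa hxb hxc
    exact htf (g a) hxa (g b) hxb (g c) hxc
      ⟨hAdjZ a b hab nab, hAdjZ a c hac nac, hAdjZ b c hbc nbc⟩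
  -- Lemma D': a clique vertex cannot have three consecutive X-neighbours
  have lemD : ∀ (c x y z : ZMod k) (p : Fin t), y = x + 1 → z = x + 2 → g c ∈ K p →
      g x ∈ X → g y ∈ X → g z ∈ X →
      c ≠ x → c ≠ y → c ≠ z →
      ¬ consZ c x → ¬ consZ c y → ¬ consZ c z → False := by
    intro c x y z p hy hzz hc hgx hgy hgz n1 n2 n3 m1 m2 m3
    obtain ⟨A, B, hAB, hABd, hsA, hsB, hcomp⟩ := hnbhd p (g c) hc
    have a1 : g x ∈ A ∪ B := by rw [hAB]; exact ⟨hgx, hAdjZ c x n1 m1⟩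
    have a2 : g y ∈ A ∪ B := by rw [hAB]; exact ⟨hgy, hAdjZ c y n2 m2⟩
    have a3 : g z ∈ A ∪ B := by rw [hAB]; exact ⟨hgz, hAdjZ c z n3 m3⟩
    have cons_xy : consZ x y := Or.inl hy
    have cons_yz : consZ y z := Or.inl (by rw [hy, hzz]; ring)
    have anti_xy : T.Anti (g x) (g y) := hAntiZ x y cons_xy
    have anti_yz : T.Anti (g y) (g z) := hAntiZ y z cons_yz
    have hxz_ne : x ≠ z := by
      intro e; rw [hzz] at e; exact z2 (by first | linear_combination e | linear_combination -e)
    have adj_xz : T.Adj (g x) (g z) := by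
      refine hAdjZ x z hxz_ne ?_
      rintro (e | e)
      · rw [hzz] at e; exact z1 (by first | linear_combination e | linear_combination -e)
      · rw [hzz] at e; exact z3 (by first | linear_combination e | linear_combination -e)
    have hgxz : g x ≠ g z := fun e => hxz_ne (ginj x z e)
    have cross : ∀ u v : V, u ∈ A → v ∈ B → ¬ T.Anti u v := by
      intro u v hu hv hanv
      exact hEA u v (hcomp u hu v hv) hanv
    rcases a1 with h1 | h1 <;> rcases a2 with h2 | h2 <;> rcases a3 with h3 | h3
    · exact hAE _ _ (hsA h1 h3 hgxz) adj_xz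
    · exact cross _ _ h2 h3 anti_yz
    · exact cross _ _ h1 h2 anti_xy
    · exact cross _ _ h1 h2 anti_xy
    · exact cross _ _ h2 h1 (antisym _ _ anti_xy)
    · exact cross _ _ h2 h1 (antisym _ _ anti_xy)
    · exact cross _ _ h3 h2 (antisym _ _ anti_yz)
    · exact hAE _ _ (hsB h1 h3 hgxz) adj_xz
  -- main case analysis
  by_cases hcp : ∃ i : ZMod k, g i ∉ X ∧ g (i + 1) ∉ X
  · -- Case II: two consecutive clique indices
    obtain ⟨i, hi, hi1⟩ := hcp
    obtain ⟨p, hp⟩ := hloc i hi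
    obtain ⟨q, hq⟩ := hloc (i + 1) hi1
    have hpq : p ≠ q := by
      intro e
      exact lemB i (i + 1) p (Or.inl rfl) hp (by rw [e]; exact hq)
    have claim1 : ∀ l : ZMod k, g l ∉ X →
        l = i - 1 ∨ l = i ∨ l = i + 1 ∨ l = i + 2 := by
      intro l hl
      by_contra hcon
      push_neg at hcon
      obtain ⟨d1, d2, d3, d4⟩ := hcon
      obtain ⟨r, hr⟩ := hloc l hl
      have e1 : r = p := by
        refine lemA l i r p d2 ?_ hr hp
        rintro (e | e)
        · exact d1 (by first | linear_combination e | linear_combination -e)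
        · exact d3 e
      have e2 : r = q := by
        refine lemA l (i + 1) r q d3 ?_ hr hq
        rintro (e | e)
        · exact d2 (by first | linear_combination e | linear_combination -e)
        · exact d4 (by first | linear_combination e | linear_combination -e)
      exact hpq (e1 ▸ e2)
    by_cases hm : g (i - 1) ∈ X
    · -- run i+3, i+4, i+5 is in X, apply lemD with c = i
      have px3 : g (i + 3) ∈ X := by
        by_contra hcc
        rcases claim1 (i + 3) hcc with e | e | e | e
        · exact z4 (by first | linear_combination e | linear_combination -e)
        · exact z3 (by first | linear_combination e | linear_combination -e)
        · exact z2 (by first | linear_combination e | linear_combination -e)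
        · exact z1 (by first | linear_combination e | linear_combination -e)
      have px4 : g (i + 4) ∈ X := by
        by_contra hcc
        rcases claim1 (i + 4) hcc with e | e | e | e
        · exact z5 (by first | linear_combination e | linear_combination -e)
        · exact z4 (by first | linear_combination e | linear_combination -e)
        · exact z3 (by first | linear_combination e | linear_combination -e)
        · exact z2 (by first | linear_combination e | linear_combination -e)
      have px5 : g (i + 5) ∈ X := by
        by_contra hcc
        rcases claim1 (i + 5) hcc with e | e | e | e
        · exact z6 (by first | linear_combination e | linear_combination -e)
        · exact z5 (by first | linear_combination e | linear_combination -e)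
        · exact z4 (by first | linear_combination e | linear_combination -e)
        · exact z3 (by first | linear_combination e | linear_combination -e)
      refine lemD i (i + 3) (i + 4) (i + 5) p (by ring) (by ring) hp px3 px4 px5
        ?_ ?_ ?_ ?_ ?_ ?_
      · intro e; exact z3 (by first | linear_combination e | linear_combination -e)
      · intro e; exact z4 (by first | linear_combination e | linear_combination -e)
      · intro e; exact z5 (by first | linear_combination e | linear_combination -e)
      · rintro (e | e)
        · exact z2 (by first | linear_combination e | linear_combination -e)
        · exact z4 (by first | linear_combination e | linear_combination -e)
      · rintro (e | e)
        · exact z3 (by first | linear_combination e | linear_combination -e)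
        · exact z5 (by first | linear_combination e | linear_combination -e)
      · rintro (e | e)
        · exact z4 (by first | linear_combination e | linear_combination -e)
        · exact z6 (by first | linear_combination e | linear_combination -e)
    · -- g (i-1) ∉ X; then g (i+2) ∈ X, apply lemD with c = i - 1
      obtain ⟨r1, hr1⟩ := hloc (i - 1) hm
      have px2 : g (i + 2) ∈ X := by
        by_contra hp2
        obtain ⟨r2, hr2⟩ := hloc (i + 2) hp2
        have e1 : r1 = q := by
          refine lemA (i - 1) (i + 1) r1 q ?_ ?_ hr1 hq
          · intro e; exact z2 (by first | linear_combination e | linear_combination -e)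
          · rintro (e | e)
            · exact z1 (by first | linear_combination e | linear_combination -e)
            · exact z3 (by first | linear_combination e | linear_combination -e)
        have e2 : r2 = p := by
          refine lemA (i + 2) i r2 p ?_ ?_ hr2 hp
          · intro e; exact z2 (by first | linear_combination e | linear_combination -e)
          · rintro (e | e)
            · exact z3 (by first | linear_combination e | linear_combination -e)
            · exact z1 (by first | linear_combination e | linear_combination -e)
        have e3 : r1 = r2 := by
          refine lemA (i - 1) (i + 2) r1 r2 ?_ ?_ hr1 hr2
          · intro e; exact z3 (by first | linear_combination e | linear_combination -e)
          · rintro (e | e)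
            · exact z2 (by first | linear_combination e | linear_combination -e)
            · exact z4 (by first | linear_combination e | linear_combination -e)
        exact hpq (by rw [← e2, ← e3, e1])
      have px3 : g (i + 3) ∈ X := by
        by_contra hcc
        rcases claim1 (i + 3) hcc with e | e | e | e
        · exact z4 (by first | linear_combination e | linear_combination -e)
        · exact z3 (by first | linear_combination e | linear_combination -e)
        · exact z2 (by first | linear_combination e | linear_combination -e)
        · exact z1 (by first | linear_combination e | linear_combination -e)
      have px4 : g (i + 4) ∈ X := by
        by_contra hcc
        rcases claim1 (i + 4) hcc with e | e | e | e
        · exact z5 (by first | linear_combination e | linear_combination -e)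
        · exact z4 (by first | linear_combination e | linear_combination -e)
        · exact z3 (by first | linear_combination e | linear_combination -e)
        · exact z2 (by first | linear_combination e | linear_combination -e)
      refine lemD (i - 1) (i + 2) (i + 3) (i + 4) r1 (by ring) (by ring) hr1 px2 px3 px4
        ?_ ?_ ?_ ?_ ?_ ?_
      · intro e; exact z3 (by first | linear_combination e | linear_combination -e)
      · intro e; exact z4 (by first | linear_combination e | linear_combination -e)
      · intro e; exact z5 (by first | linear_combination e | linear_combination -e)
      · rintro (e | e)
        · exact z2 (by first | linear_combination e | linear_combination -e)
        · exact z4 (by first | linear_combination e | linear_combination -e)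
      · rintro (e | e)
        · exact z3 (by first | linear_combination e | linear_combination -e)
        · exact z5 (by first | linear_combination e | linear_combination -e)
      · rintro (e | e)
        · exact z4 (by first | linear_combination e | linear_combination -e)
        · exact z6 (by first | linear_combination e | linear_combination -e)
  · -- Case I: no two consecutive clique indices
    have hncp : ∀ a : ZMod k, g a ∉ X → g (a + 1) ∈ X := by
      intro a ha
      by_contra h'
      exact hcp ⟨a, ha, h'⟩
    by_cases h1 : ∃ c0 : ZMod k, g c0 ∉ X
    · obtain ⟨c0, hc0⟩ := h1
      by_cases h2 : ∃ c1 : ZMod k, c1 ≠ c0 ∧ g c1 ∉ X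
      · obtain ⟨c1, hc1ne, hc1⟩ := h2
        by_cases h3 : ∃ c2 : ZMod k, c2 ≠ c0 ∧ c2 ≠ c1 ∧ g c2 ∉ X
        · -- three distinct clique indices, none consecutive: shift by one
          obtain ⟨c2, hc20, hc21, hc2⟩ := h3
          have hs0 : g (c0 + 1) ∈ X := hncp c0 hc0
          have hs1 : g (c1 + 1) ∈ X := hncp c1 hc1
          have hs2 : g (c2 + 1) ∈ X := hncp c2 hc2
          have key : ∀ a b : ZMod k, g a ∉ X → g b ∉ X → a ≠ b →
              ¬ consZ (a + 1) (b + 1) := by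
            rintro a b ha hb hab (e | e)
            · have : b = a + 1 := by linear_combination e
              rw [this] at hb
              exact hb (hncp a ha)
            · have : a = b + 1 := by linear_combination e
              rw [this] at ha
              exact ha (hncp b hb)
          refine lemC (c0 + 1) (c1 + 1) (c2 + 1) ?_ ?_ ?_
            (key c0 c1 hc0 hc1 (Ne.symm hc1ne)) (key c0 c2 hc0 hc2 (Ne.symm hc20))
            (key c1 c2 hc1 hc2 (Ne.symm hc21)) hs0 hs1 hs2
          · intro e; exact hc1ne (by first | linear_combination e | linear_combination -e)
          · intro e; exact hc20 (by first | linear_combination e | linear_combination -e)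
          · intro e; exact hc21 (by first | linear_combination e | linear_combination -e)
        · -- at most two clique indices c0, c1
          push_neg at h3
          have honly : ∀ l : ZMod k, g l ∉ X → l = c0 ∨ l = c1 := by
            intro l hl
            by_contra hcon
            push_neg at hcon
            exact hl (h3 l hcon.1 hcon.2)
          -- choose a triple of pairwise-nonconsecutive indices avoiding c0, c1
          by_cases hodd : c1 = c0 + 1 ∨ c1 = c0 + 3 ∨ c1 = c0 + 5
          · -- use c0+2, c0+4, c0+6
            have px : ∀ m : ZMod k, m = 2 ∨ m = 4 ∨ m = 6 → g (c0 + m) ∈ X := by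
              intro m hm
              by_contra hcc
              rcases honly (c0 + m) hcc with e | e
              · rcases hm with rfl | rfl | rfl
                · exact z2 (by first | linear_combination e | linear_combination -e)
                · exact z4 (by first | linear_combination e | linear_combination -e)
                · exact z6 (by first | linear_combination e | linear_combination -e)
              · rcases hodd with rfl | rfl | rfl <;> rcases hm with rfl | rfl | rfl
                · exact z1 (by first | linear_combination e | linear_combination -e)
                · exact z3 (by first | linear_combination e | linear_combination -e)
                · exact z5 (by first | linear_combination e | linear_combination -e)
                · exact z1 (by first | linear_combination e | linear_combination -e)
                · exact z1 (by first | linear_combination e | linear_combination -e)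
                · exact z3 (by first | linear_combination e | linear_combination -e)
                · exact z3 (by first | linear_combination e | linear_combination -e)
                · exact z1 (by first | linear_combination e | linear_combination -e)
                · exact z1 (by first | linear_combination e | linear_combination -e)
            refine lemC (c0 + 2) (c0 + 4) (c0 + 6) ?_ ?_ ?_ ?_ ?_ ?_
              (px 2 (Or.inl rfl)) (px 4 (Or.inr (Or.inl rfl))) (px 6 (Or.inr (Or.inr rfl)))
            · intro e; exact z2 (by first | linear_combination e | linear_combination -e)
            · intro e; exact z4 (by first | linear_combination e | linear_combination -e)
            · intro e; exact z2 (by first | linear_combination e | linear_combination -e)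
            · rintro (e | e)
              · exact z1 (by first | linear_combination e | linear_combination -e)
              · exact z3 (by first | linear_combination e | linear_combination -e)
            · rintro (e | e)
              · exact z3 (by first | linear_combination e | linear_combination -e)
              · exact z5 (by first | linear_combination e | linear_combination -e)
            · rintro (e | e)
              · exact z1 (by first | linear_combination e | linear_combination -e)
              · exact z3 (by first | linear_combination e | linear_combination -e)
          · -- use c0+1, c0+3, c0+5
            push_neg at hodd
            obtain ⟨o1, o3, o5⟩ := hodd
            have px : ∀ m : ZMod k, m = 1 ∨ m = 3 ∨ m = 5 → g (c0 + m) ∈ X := by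
              intro m hm
              by_contra hcc
              rcases honly (c0 + m) hcc with e | e
              · rcases hm with rfl | rfl | rfl
                · exact z1 (by first | linear_combination e | linear_combination -e)
                · exact z3 (by first | linear_combination e | linear_combination -e)
                · exact z5 (by first | linear_combination e | linear_combination -e)
              · rcases hm with rfl | rfl | rfl
                · exact o1 e.symm
                · exact o3 e.symm
                · exact o5 e.symm
            refine lemC (c0 + 1) (c0 + 3) (c0 + 5) ?_ ?_ ?_ ?_ ?_ ?_
              (px 1 (Or.inl rfl)) (px 3 (Or.inr (Or.inl rfl))) (px 5 (Or.inr (Or.inr rfl)))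
            · intro e; exact z2 (by first | linear_combination e | linear_combination -e)
            · intro e; exact z4 (by first | linear_combination e | linear_combination -e)
            · intro e; exact z2 (by first | linear_combination e | linear_combination -e)
            · rintro (e | e)
              · exact z1 (by first | linear_combination e | linear_combination -e)
              · exact z3 (by first | linear_combination e | linear_combination -e)
            · rintro (e | e)
              · exact z3 (by first | linear_combination e | linear_combination -e)
              · exact z5 (by first | linear_combination e | linear_combination -e)
            · rintro (e | e)
              · exact z1 (by first | linear_combination e | linear_combination -e)
              · exact z3 (by first | linear_combination e | linear_combination -e)
      · -- exactly one clique index c0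
        push_neg at h2
        have honly : ∀ l : ZMod k, g l ∉ X → l = c0 := fun l hl => by
          by_contra hne; exact hl (h2 l hne)
        have px : ∀ m : ZMod k, m = 1 ∨ m = 3 ∨ m = 5 → g (c0 + m) ∈ X := by
          intro m hm
          by_contra hcc
          have e := honly (c0 + m) hcc
          rcases hm with rfl | rfl | rfl
          · exact z1 (by first | linear_combination e | linear_combination -e)
          · exact z3 (by first | linear_combination e | linear_combination -e)
          · exact z5 (by first | linear_combination e | linear_combination -e)
        refine lemC (c0 + 1) (c0 + 3) (c0 + 5) ?_ ?_ ?_ ?_ ?_ ?_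
          (px 1 (Or.inl rfl)) (px 3 (Or.inr (Or.inl rfl))) (px 5 (Or.inr (Or.inr rfl)))
        · intro e; exact z2 (by first | linear_combination e | linear_combination -e)
        · intro e; exact z4 (by first | linear_combination e | linear_combination -e)
        · intro e; exact z2 (by first | linear_combination e | linear_combination -e)
        · rintro (e | e)
          · exact z1 (by first | linear_combination e | linear_combination -e)
          · exact z3 (by first | linear_combination e | linear_combination -e)
        · rintro (e | e)
          · exact z3 (by first | linear_combination e | linear_combination -e)
          · exact z5 (by first | linear_combination e | linear_combination -e)
        · rintro (e | e)
          · exact z1 (by first | linear_combination e | linear_combination -e)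
          · exact z3 (by first | linear_combination e | linear_combination -e)
    · -- all vertices in X: take 0, 2, 4
      push_neg at h1
      refine lemC (0 : ZMod k) 2 4 ?_ ?_ ?_ ?_ ?_ ?_ (h1 0) (h1 2) (h1 4)
      · intro e; exact z2 (by first | linear_combination e | linear_combination -e)
      · intro e; exact z4 (by first | linear_combination e | linear_combination -e)
      · intro e; exact z2 (by first | linear_combination e | linear_combination -e)
      · rintro (e | e)
        · exact z1 (by first | linear_combination e | linear_combination -e)
        · exact z3 (by first | linear_combination e | linear_combination -e)
      · rintro (e | e)
        · exact z3 (by first | linear_combination e | linear_combination -e)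
        · exact z5 (by first | linear_combination e | linear_combination -e)
      · rintro (e | e)
        · exact z1 (by first | linear_combination e | linear_combination -e)
        · exact z3 (by first | linear_combination e | linear_combination -e)
end

section
/- Let T be a weighted monogamous trigraph with a switchable pair ab. If T is Berge, then the trigraphs T_{a→S}, T_{b→S}, T_{a→K} and T_{b→K} are Berge. -/
namespace Trigraph

section Aux

variable {V : Type*}

lemma adjs {T : Trigraph V} {u v : V} (h : T.Adj u v) : T.Adj v u :=
  ⟨h.1.symm, by rw [T.symm v u]; exact h.2⟩

lemma antis {T : Trigraph V} {u v : V} (h : T.Anti u v) : T.Anti v u :=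
  ⟨h.1.symm, by rw [T.symm v u]; exact h.2⟩

lemma modeq_of_modk {k x y : ℕ} (hy : y < k) (H : x % k = y) : x ≡ y [MOD k] := by
  unfold Nat.ModEq
  rw [Nat.mod_eq_of_lt hy]
  exact H

lemma modeq_eqv {k x y : ℕ} (hx : x < k) (hy : y < k) (H : x ≡ y [MOD k]) : x = y := by
  unfold Nat.ModEq at H
  rwa [Nat.mod_eq_of_lt hx, Nat.mod_eq_of_lt hy] at H

lemma modeq_absurd {k x c d : ℕ} (hcd : c < d) (hdk : d - c < k)
    (H : x + c ≡ x + d [MOD k]) : False := by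
  have h1 := (Nat.modEq_iff_dvd' (by omega : x + c ≤ x + d)).mp H
  have h2 : k ∣ d - c := by
    have e : x + d - (x + c) = d - c := by omega
    rwa [e] at h1
  have := Nat.le_of_dvd (by omega) h2
  omega

lemma modeq_self_absurd {k x d : ℕ} (h0 : 0 < d) (hdk : d < k)
    (H : x + d ≡ x [MOD k]) : False := by
  have H' : x + 0 ≡ x + d [MOD k] := by simpa using H.symm
  exact modeq_absurd h0 (by omega) H'

lemma modeq_addk {k x : ℕ} : x + k ≡ x [MOD k] := by
  unfold Nat.ModEq
  rw [Nat.add_mod_right]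

lemma compl_theta (T : Trigraph V) (u v : V) : T.compl.θ u v = -(T.θ u v) := rfl

open Classical in
lemma thetaS_some (T : Trigraph V) (a b u v : V) :
    (T.expandS a b).θ (some u) (some v) =
      if (u = a ∧ v = b) ∨ (u = b ∧ v = a) then 1 else T.θ u v := rfl

open Classical in
lemma thetaS_none (T : Trigraph V) (a b v : V) :
    (T.expandS a b).θ none (some v) = if T.Adj a v ∧ v ≠ b then 1 else -1 := rfl

open Classical in
lemma thetaK_some (T : Trigraph V) (a b u v : V) :
    (T.expandK a b).θ (some u) (some v) =
      if (u = a ∧ v = b) ∨ (u = b ∧ v = a) then 1 else T.θ u v := rfl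

open Classical in
lemma thetaK_none (T : Trigraph V) (a b v : V) :
    (T.expandK a b).θ none (some v) =
      if (T.Adj a v ∧ v ≠ b) ∨ v = a then 1 else -1 := rfl

variable {T : Trigraph V} {a b : V}

lemma theta_one (hmono : T.Monogamous) (hab : T.Switch a b) {w : V}
    (hc : T.Adj a w ∧ w ≠ b) : T.θ a w = 1 := by
  rcases hc.1.2 with e | e
  · exact absurd (hmono a w b ⟨hc.1.1, e⟩ hab) hc.2
  · exact e

lemma anti_helper (hab : T.Switch a b) {w : V} (hwa : w ≠ a)
    (hc : ¬ (T.Adj a w ∧ w ≠ b)) : T.Anti a w := by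
  by_cases hwb : w = b
  · subst hwb; exact ⟨hab.1, Or.inr hab.2⟩
  · have haw : a ≠ w := hwa.symm
    rcases T.range a w haw with e | e | e
    · exact ⟨haw, Or.inl e⟩
    · exact ⟨haw, Or.inr e⟩
    · exact absurd ⟨⟨haw, Or.inr e⟩, hwb⟩ hc

lemma compl_adj_helper (hab : T.Switch a b) {w : V} (hwa : w ≠ a)
    (hc : ¬ (T.Adj a w ∧ w ≠ b)) : T.compl.Adj a w := by
  by_cases hwb : w = b
  · subst hwb
    exact ⟨hab.1, Or.inl (by rw [compl_theta, hab.2, neg_zero])⟩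
  · have haw : a ≠ w := hwa.symm
    rcases T.range a w haw with e | e | e
    · exact ⟨haw, Or.inr (by rw [compl_theta, e]; try norm_num)⟩
    · exact absurd ⟨⟨haw, Or.inl e⟩, hwb⟩ hc
    · exact absurd ⟨⟨haw, Or.inr e⟩, hwb⟩ hc

lemma compl_anti_helper (hmono : T.Monogamous) (hab : T.Switch a b) {w : V}
    (hc : T.Adj a w ∧ w ≠ b) : T.compl.Anti a w := by
  have hθ := theta_one hmono hab hc
  exact ⟨hc.1.1, Or.inl (by rw [compl_theta, hθ]; try norm_num)⟩

lemma S_adj_some (hab : T.Switch a b) {u v : V}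
    (h : (T.expandS a b).Adj (some u) (some v)) : T.Adj u v := by
  have hθ := h.2
  rw [thetaS_some] at hθ
  have hne : u ≠ v := fun e => h.1 (by rw [e])
  by_cases hc : (u = a ∧ v = b) ∨ (u = b ∧ v = a)
  · rcases hc with ⟨h1, h2⟩ | ⟨h1, h2⟩ <;> subst h1 <;> subst h2
    · exact ⟨hab.1, Or.inl hab.2⟩
    · exact ⟨hab.1.symm, Or.inl (by rw [T.symm]; exact hab.2)⟩
  · rw [if_neg hc] at hθ
    exact ⟨hne, hθ⟩

lemma S_anti_some {u v : V}
    (h : (T.expandS a b).Anti (some u) (some v)) : T.Anti u v := by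
  have hθ := h.2
  rw [thetaS_some] at hθ
  have hne : u ≠ v := fun e => h.1 (by rw [e])
  by_cases hc : (u = a ∧ v = b) ∨ (u = b ∧ v = a)
  · rw [if_pos hc] at hθ
    rcases hθ with e | e <;> omega
  · rw [if_neg hc] at hθ
    exact ⟨hne, hθ⟩

lemma S_adj_none {w : V} (h : (T.expandS a b).Adj none (some w)) :
    T.Adj a w ∧ w ≠ b := by
  by_cases hc : T.Adj a w ∧ w ≠ b
  · exact hc
  · exfalso
    have hθ := h.2
    rw [thetaS_none, if_neg hc] at hθ
    rcases hθ with e | e <;> omega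

lemma S_anti_none {w : V} (h : (T.expandS a b).Anti none (some w)) :
    ¬ (T.Adj a w ∧ w ≠ b) := by
  intro hc
  have hθ := h.2
  rw [thetaS_none, if_pos hc] at hθ
  rcases hθ with e | e <;> omega

lemma K_adj_some (hab : T.Switch a b) {u v : V}
    (h : (T.expandK a b).Adj (some u) (some v)) : T.Adj u v := by
  have hθ := h.2
  rw [thetaK_some] at hθ
  have hne : u ≠ v := fun e => h.1 (by rw [e])
  by_cases hc : (u = a ∧ v = b) ∨ (u = b ∧ v = a)
  · rcases hc with ⟨h1, h2⟩ | ⟨h1, h2⟩ <;> subst h1 <;> subst h2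
    · exact ⟨hab.1, Or.inl hab.2⟩
    · exact ⟨hab.1.symm, Or.inl (by rw [T.symm]; exact hab.2)⟩
  · rw [if_neg hc] at hθ
    exact ⟨hne, hθ⟩

lemma K_anti_some {u v : V}
    (h : (T.expandK a b).Anti (some u) (some v)) : T.Anti u v := by
  have hθ := h.2
  rw [thetaK_some] at hθ
  have hne : u ≠ v := fun e => h.1 (by rw [e])
  by_cases hc : (u = a ∧ v = b) ∨ (u = b ∧ v = a)
  · rw [if_pos hc] at hθ
    rcases hθ with e | e <;> omega
  · rw [if_neg hc] at hθ
    exact ⟨hne, hθ⟩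

lemma K_adj_none {w : V} (h : (T.expandK a b).Adj none (some w)) :
    (T.Adj a w ∧ w ≠ b) ∨ w = a := by
  by_cases hc : (T.Adj a w ∧ w ≠ b) ∨ w = a
  · exact hc
  · exfalso
    have hθ := h.2
    rw [thetaK_none, if_neg hc] at hθ
    rcases hθ with e | e <;> omega

lemma K_anti_none {w : V} (h : (T.expandK a b).Anti none (some w)) :
    ¬ ((T.Adj a w ∧ w ≠ b) ∨ w = a) := by
  intro hc
  have hθ := h.2
  rw [thetaK_none, if_pos hc] at hθ
  rcases hθ with e | e <;> omega

lemma Sc_adj_some {u v : V}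
    (h : (T.expandS a b).compl.Adj (some u) (some v)) : T.compl.Adj u v := by
  have hθ := h.2
  rw [compl_theta, thetaS_some] at hθ
  have hne : u ≠ v := fun e => h.1 (by rw [e])
  by_cases hc : (u = a ∧ v = b) ∨ (u = b ∧ v = a)
  · rw [if_pos hc] at hθ
    rcases hθ with e | e <;> omega
  · rw [if_neg hc] at hθ
    exact ⟨hne, by rw [compl_theta]; exact hθ⟩

lemma Sc_anti_some (hab : T.Switch a b) {u v : V}
    (h : (T.expandS a b).compl.Anti (some u) (some v)) : T.compl.Anti u v := by
  have hθ := h.2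
  rw [compl_theta, thetaS_some] at hθ
  have hne : u ≠ v := fun e => h.1 (by rw [e])
  by_cases hc : (u = a ∧ v = b) ∨ (u = b ∧ v = a)
  · rcases hc with ⟨h1, h2⟩ | ⟨h1, h2⟩ <;> subst h1 <;> subst h2
    · exact ⟨hab.1, Or.inr (by rw [compl_theta, hab.2, neg_zero])⟩
    · exact ⟨hab.1.symm, Or.inr (by rw [compl_theta, T.symm, hab.2, neg_zero])⟩
  · rw [if_neg hc] at hθ
    exact ⟨hne, by rw [compl_theta]; exact hθ⟩

lemma Sc_adj_none {w : V} (h : (T.expandS a b).compl.Adj none (some w)) :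
    ¬ (T.Adj a w ∧ w ≠ b) := by
  intro hc
  have hθ := h.2
  rw [compl_theta, thetaS_none, if_pos hc] at hθ
  rcases hθ with e | e <;> omega

lemma Sc_anti_none {w : V} (h : (T.expandS a b).compl.Anti none (some w)) :
    T.Adj a w ∧ w ≠ b := by
  by_cases hc : T.Adj a w ∧ w ≠ b
  · exact hc
  · exfalso
    have hθ := h.2
    rw [compl_theta, thetaS_none, if_neg hc] at hθ
    rcases hθ with e | e <;> omega

lemma Kc_adj_some {u v : V}
    (h : (T.expandK a b).compl.Adj (some u) (some v)) : T.compl.Adj u v := by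
  have hθ := h.2
  rw [compl_theta, thetaK_some] at hθ
  have hne : u ≠ v := fun e => h.1 (by rw [e])
  by_cases hc : (u = a ∧ v = b) ∨ (u = b ∧ v = a)
  · rw [if_pos hc] at hθ
    rcases hθ with e | e <;> omega
  · rw [if_neg hc] at hθ
    exact ⟨hne, by rw [compl_theta]; exact hθ⟩

lemma Kc_anti_some (hab : T.Switch a b) {u v : V}
    (h : (T.expandK a b).compl.Anti (some u) (some v)) : T.compl.Anti u v := by
  have hθ := h.2
  rw [compl_theta, thetaK_some] at hθ
  have hne : u ≠ v := fun e => h.1 (by rw [e])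
  by_cases hc : (u = a ∧ v = b) ∨ (u = b ∧ v = a)
  · rcases hc with ⟨h1, h2⟩ | ⟨h1, h2⟩ <;> subst h1 <;> subst h2
    · exact ⟨hab.1, Or.inr (by rw [compl_theta, hab.2, neg_zero])⟩
    · exact ⟨hab.1.symm, Or.inr (by rw [compl_theta, T.symm, hab.2, neg_zero])⟩
  · rw [if_neg hc] at hθ
    exact ⟨hne, by rw [compl_theta]; exact hθ⟩

lemma Kc_adj_none {w : V} (h : (T.expandK a b).compl.Adj none (some w)) :
    ¬ ((T.Adj a w ∧ w ≠ b) ∨ w = a) := by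
  intro hc
  have hθ := h.2
  rw [compl_theta, thetaK_none, if_pos hc] at hθ
  rcases hθ with e | e <;> omega

lemma Kc_anti_none {w : V} (h : (T.expandK a b).compl.Anti none (some w)) :
    (T.Adj a w ∧ w ≠ b) ∨ w = a := by
  by_cases hc : (T.Adj a w ∧ w ≠ b) ∨ w = a
  · exact hc
  · exfalso
    have hθ := h.2
    rw [compl_theta, thetaK_none, if_neg hc] at hθ
    rcases hθ with e | e <;> omega

lemma Sc_adj_some_a (hmono : T.Monogamous) (hab : T.Switch a b) {x : V} (hxa : x ≠ a)
    (h : (T.expandS a b).compl.Adj (some a) (some x)) : T.θ a x = -1 := by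
  have hθ := h.2
  rw [compl_theta, thetaS_some] at hθ
  by_cases hxb : x = b
  · exfalso
    rw [if_pos (Or.inl ⟨rfl, hxb⟩)] at hθ
    rcases hθ with e | e <;> omega
  · rw [if_neg (by rintro (⟨h1, h2⟩ | ⟨h1, h2⟩); exacts [hxb h2, hab.1 h1])] at hθ
    have hax : a ≠ x := fun e => hxa e.symm
    rcases hθ with e | e
    · exact absurd (hmono a x b ⟨hax, by omega⟩ hab) hxb
    · omega

lemma Kc_adj_some_a (hmono : T.Monogamous) (hab : T.Switch a b) {x : V} (hxa : x ≠ a)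
    (h : (T.expandK a b).compl.Adj (some a) (some x)) : T.θ a x = -1 := by
  have hθ := h.2
  rw [compl_theta, thetaK_some] at hθ
  by_cases hxb : x = b
  · exfalso
    rw [if_pos (Or.inl ⟨rfl, hxb⟩)] at hθ
    rcases hθ with e | e <;> omega
  · rw [if_neg (by rintro (⟨h1, h2⟩ | ⟨h1, h2⟩); exacts [hxb h2, hab.1 h1])] at hθ
    have hax : a ≠ x := fun e => hxa e.symm
    rcases hθ with e | e
    · exact absurd (hmono a x b ⟨hax, by omega⟩ hab) hxb
    · omega

lemma isHole_transfer {T' : Trigraph (Option V)} {T : Trigraph V} {a : V}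
    (H1 : ∀ u v : V, T'.Adj (some u) (some v) → T.Adj u v)
    (H2 : ∀ u v : V, T'.Anti (some u) (some v) → T.Anti u v)
    (H3 : ∀ w : V, w ≠ a → T'.Adj none (some w) → T.Adj a w)
    (H4 : ∀ w : V, w ≠ a → T'.Anti none (some w) → T.Anti a w)
    {k : ℕ} {h : Fin k → Option V} (hh : T'.IsHole k h)
    (hc : ∀ i j : Fin k, h i = none → h j ≠ some a) :
    T.IsHole k (fun i => (h i).getD a) := by
  have hk4 := hh.1
  have hinj := hh.2.1
  have hcond := hh.2.2
  refine ⟨hk4, ?_, ?_⟩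
  · intro i j hij
    have hij' : (h i).getD a = (h j).getD a := hij
    rcases hi : h i with _ | u <;> rcases hj : h j with _ | v
    · exact hinj (hi.trans hj.symm)
    · exfalso
      rw [hi, hj] at hij'
      simp only [Option.getD_some, Option.getD_none] at hij'
      exact hc i j hi (hj.trans (congrArg some hij'.symm))
    · exfalso
      rw [hi, hj] at hij'
      simp only [Option.getD_some, Option.getD_none] at hij'
      exact hc j i hj (hi.trans (congrArg some hij'))
    · rw [hi, hj] at hij'
      simp only [Option.getD_some] at hij'
      exact hinj (by rw [hi, hj, hij'])
  · intro i j
    constructor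
    · intro hC
      show T.Adj ((h i).getD a) ((h j).getD a)
      rcases hi : h i with _ | u <;> rcases hj : h j with _ | v
      · exfalso
        have e := hinj (hi.trans hj.symm)
        subst e
        rcases hC with e | e <;>
          exact modeq_self_absurd (by omega) (by omega) (modeq_of_modk i.isLt e)
      · have hadj := (hcond i j).1 hC
        rw [hi, hj] at hadj
        exact H3 v (fun e => hc i j hi (by rw [hj, e])) hadj
      · have hadj := (hcond i j).1 hC
        rw [hi, hj] at hadj
        exact adjs (H3 u (fun e => hc j i hj (by rw [hi, e])) (adjs hadj))
      · have hadj := (hcond i j).1 hC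
        rw [hi, hj] at hadj
        exact H1 u v hadj
    · intro hne hC
      show T.Anti ((h i).getD a) ((h j).getD a)
      rcases hi : h i with _ | u <;> rcases hj : h j with _ | v
      · exact absurd (hinj (hi.trans hj.symm)) hne
      · have hanti := (hcond i j).2 hne hC
        rw [hi, hj] at hanti
        exact H4 v (fun e => hc i j hi (by rw [hj, e])) hanti
      · have hanti := (hcond i j).2 hne hC
        rw [hi, hj] at hanti
        exact antis (H4 u (fun e => hc j i hj (by rw [hi, e])) (antis hanti))
      · have hanti := (hcond i j).2 hne hC
        rw [hi, hj] at hanti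
        exact H2 u v hanti

lemma S_no_mixed (hmono : T.Monogamous) (hab : T.Switch a b)
    {k : ℕ} (hodd : Odd k) {h : Fin k → Option V} (hh : (T.expandS a b).IsHole k h)
    {i0 j : Fin k} (hi0 : h i0 = none) (hj : h j = some a) : False := by
  have hk4 := hh.1
  have hinj := hh.2.1
  have hcond := hh.2.2
  have hk5 : 5 ≤ k := by obtain ⟨m, hm⟩ := hodd; omega
  have hk0 : 0 < k := by omega
  have hij : i0 ≠ j := by intro e; rw [e, hj] at hi0; exact Option.some_ne_none a hi0
  obtain ⟨n1, hc1⟩ : ∃ n1 : Fin k, (i0.val + 1) % k = n1.val :=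
    ⟨⟨(i0.val + 1) % k, Nat.mod_lt _ hk0⟩, rfl⟩
  obtain ⟨n2, hc2'⟩ : ∃ n2 : Fin k, (i0.val + (k - 1)) % k = n2.val :=
    ⟨⟨(i0.val + (k - 1)) % k, Nat.mod_lt _ hk0⟩, rfl⟩
  have hc2 : (n2.val + 1) % k = i0.val := by
    rw [← hc2', Nat.mod_add_mod]
    have e : i0.val + (k - 1) + 1 = i0.val + k := by omega
    rw [e, Nat.add_mod_right, Nat.mod_eq_of_lt i0.isLt]
  have m1 : i0.val + 1 ≡ n1.val [MOD k] := modeq_of_modk n1.isLt hc1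
  have m2 : n2.val + 1 ≡ i0.val [MOD k] := modeq_of_modk i0.isLt hc2
  have m2' : i0.val + (k - 1) ≡ n2.val [MOD k] := modeq_of_modk n2.isLt hc2'
  have hn1i : n1 ≠ i0 := by
    intro e; rw [e] at m1
    exact modeq_self_absurd (by omega) (by omega) m1
  have hn2i : n2 ≠ i0 := by
    intro e; rw [e] at m2
    exact modeq_self_absurd (by omega) (by omega) m2
  have key : ∀ m : Fin k,
      ((i0.val + 1) % k = m.val ∨ (m.val + 1) % k = i0.val) → m ≠ i0 →
      ∃ u : V, h m = some u ∧ T.θ a u = 1 ∧ j ≠ m := by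
    intro m hCm hmi
    have hval : h m ≠ none := fun e => hmi (hinj (e.trans hi0.symm))
    obtain ⟨u, hu⟩ := Option.ne_none_iff_exists'.mp hval
    have hadj := (hcond i0 m).1 hCm
    rw [hi0, hu] at hadj
    have hu2 := S_adj_none hadj
    refine ⟨u, hu, theta_one hmono hab hu2, ?_⟩
    intro e; rw [e, hu] at hj
    exact hu2.1.1 (Option.some.inj hj).symm
  obtain ⟨u1, hu1, hθ1, hju1⟩ := key n1 (Or.inl hc1) hn1i
  obtain ⟨u2, hu2, hθ2, hju2⟩ := key n2 (Or.inr hc2) hn2i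
  have forceC : ∀ (m : Fin k) (u : V), h m = some u → T.θ a u = 1 → j ≠ m →
      ((j.val + 1) % k = m.val ∨ (m.val + 1) % k = j.val) := by
    intro m u hu hθ hjm
    by_contra hC
    have hanti := (hcond j m).2 hjm hC
    rw [hj, hu] at hanti
    have h2 := (S_anti_some hanti).2
    rcases h2 with e | e <;> omega
  have mj1 : i0.val + 2 ≡ j.val [MOD k] := by
    rcases forceC n1 u1 hu1 hθ1 hju1 with hcc | hcc
    · exfalso
      have h1 := (modeq_of_modk n1.isLt hcc).trans m1.symm
      have h2 := Nat.ModEq.add_right_cancel' 1 h1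
      exact hij (Fin.ext (modeq_eqv j.isLt i0.isLt h2).symm)
    · have h1 := modeq_of_modk j.isLt hcc
      have h2 := m1.add_right 1
      have e : i0.val + 1 + 1 = i0.val + 2 := by omega
      rw [e] at h2
      exact h2.trans h1
  have mj2 : j.val + 2 ≡ i0.val [MOD k] := by
    rcases forceC n2 u2 hu2 hθ2 hju2 with hcc | hcc
    · have h1 := (modeq_of_modk n2.isLt hcc).trans m2'.symm
      have h2 := h1.add_right 1
      have e1 : j.val + 1 + 1 = j.val + 2 := by omega
      have e2 : i0.val + (k - 1) + 1 = i0.val + k := by omega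
      rw [e1, e2] at h2
      exact h2.trans modeq_addk
    · exfalso
      have h1 := modeq_of_modk j.isLt hcc
      have h2 := m2.symm.trans h1
      exact hij (Fin.ext (modeq_eqv i0.isLt j.isLt h2))
  have hfin := (mj1.add_right 2).trans mj2
  have e : i0.val + 2 + 2 = i0.val + 4 := by omega
  rw [e] at hfin
  exact modeq_self_absurd (by omega) (by omega) hfin

lemma K_no_mixed (hmono : T.Monogamous) (hab : T.Switch a b)
    {k : ℕ} (hodd : Odd k) {h : Fin k → Option V} (hh : (T.expandK a b).IsHole k h)
    {i0 j : Fin k} (hi0 : h i0 = none) (hj : h j = some a) : False := by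
  have hk4 := hh.1
  have hinj := hh.2.1
  have hcond := hh.2.2
  have hk0 : 0 < k := by omega
  have hij : i0 ≠ j := by intro e; rw [e, hj] at hi0; exact Option.some_ne_none a hi0
  have hCij : (i0.val + 1) % k = j.val ∨ (j.val + 1) % k = i0.val := by
    by_contra hC
    have hanti := (hcond i0 j).2 hij hC
    rw [hi0, hj] at hanti
    exact K_anti_none hanti (Or.inr rfl)
  have step : ∀ m : Fin k, m ≠ i0 → j ≠ m →
      ((i0.val + 1) % k = m.val ∨ (m.val + 1) % k = i0.val) →
      ¬ ((j.val + 1) % k = m.val ∨ (m.val + 1) % k = j.val) → False := by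
    intro m hmi hjm hCm hnC
    have hval : h m ≠ none := fun e => hmi (hinj (e.trans hi0.symm))
    obtain ⟨u, hu⟩ := Option.ne_none_iff_exists'.mp hval
    have hadj := (hcond i0 m).1 hCm
    rw [hi0, hu] at hadj
    have hu2 := K_adj_none hadj
    have hua : u ≠ a := by
      intro e; rw [e] at hu; exact hjm (hinj (hj.trans hu.symm))
    have hu3 : T.Adj a u ∧ u ≠ b := hu2.resolve_right hua
    have hθu := theta_one hmono hab hu3
    have hanti := (hcond j m).2 hjm hnC
    rw [hj, hu] at hanti
    have h2 := (K_anti_some hanti).2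
    rcases h2 with e | e <;> omega
  rcases hCij with hcA | hcB
  · obtain ⟨n2, hc2'⟩ : ∃ n2 : Fin k, (i0.val + (k - 1)) % k = n2.val :=
      ⟨⟨(i0.val + (k - 1)) % k, Nat.mod_lt _ hk0⟩, rfl⟩
    have hc2 : (n2.val + 1) % k = i0.val := by
      rw [← hc2', Nat.mod_add_mod]
      have e : i0.val + (k - 1) + 1 = i0.val + k := by omega
      rw [e, Nat.add_mod_right, Nat.mod_eq_of_lt i0.isLt]
    have mA : i0.val + 1 ≡ j.val [MOD k] := modeq_of_modk j.isLt hcA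
    have m2 : n2.val + 1 ≡ i0.val [MOD k] := modeq_of_modk i0.isLt hc2
    have hn2i : n2 ≠ i0 := by
      intro e; rw [e] at m2
      exact modeq_self_absurd (by omega) (by omega) m2
    have hjn2 : j ≠ n2 := by
      intro e; rw [e] at mA
      have h1 := (mA.add_right 1).trans m2
      have e2 : i0.val + 1 + 1 = i0.val + 2 := by omega
      rw [e2] at h1
      exact modeq_self_absurd (by omega) (by omega) h1
    apply step n2 hn2i hjn2 (Or.inr hc2)
    rintro (hcc | hcc)
    · have h1 := modeq_of_modk n2.isLt hcc
      have h2 := (((mA.add_right 1).trans h1).add_right 1).trans m2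
      have e2 : i0.val + 1 + 1 + 1 = i0.val + 3 := by omega
      rw [e2] at h2
      exact modeq_self_absurd (by omega) (by omega) h2
    · have h1 := modeq_of_modk j.isLt hcc
      exact hij (Fin.ext (modeq_eqv i0.isLt j.isLt (m2.symm.trans h1)))
  · obtain ⟨n1, hc1⟩ : ∃ n1 : Fin k, (i0.val + 1) % k = n1.val :=
      ⟨⟨(i0.val + 1) % k, Nat.mod_lt _ hk0⟩, rfl⟩
    have mB : j.val + 1 ≡ i0.val [MOD k] := modeq_of_modk i0.isLt hcB
    have m1 : i0.val + 1 ≡ n1.val [MOD k] := modeq_of_modk n1.isLt hc1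
    have hn1i : n1 ≠ i0 := by
      intro e; rw [e] at m1
      exact modeq_self_absurd (by omega) (by omega) m1
    have hjn1 : j ≠ n1 := by
      intro e
      rw [← e] at m1
      have h1 := (m1.add_right 1).trans mB
      have e2 : i0.val + 1 + 1 = i0.val + 2 := by omega
      rw [e2] at h1
      exact modeq_self_absurd (by omega) (by omega) h1
    apply step n1 hn1i hjn1 (Or.inl hc1)
    rintro (hcc | hcc)
    · have h1 := modeq_of_modk n1.isLt hcc
      exact hn1i (Fin.ext (modeq_eqv n1.isLt i0.isLt (h1.symm.trans mB)))
    · have h1 := modeq_of_modk j.isLt hcc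
      have h2 := (((m1.add_right 1).trans h1).add_right 1).trans mB
      have e2 : i0.val + 1 + 1 + 1 = i0.val + 3 := by omega
      rw [e2] at h2
      exact modeq_self_absurd (by omega) (by omega) h2

lemma Sc_no_mixed (hmono : T.Monogamous) (hab : T.Switch a b)
    {k : ℕ} {h : Fin k → Option V}
    (hh : (T.expandS a b).compl.IsHole k h)
    {i0 j : Fin k} (hi0 : h i0 = none) (hj : h j = some a) : False := by
  have hk4 := hh.1
  have hinj := hh.2.1
  have hcond := hh.2.2
  have hk0 : 0 < k := by omega
  have hij : i0 ≠ j := by intro e; rw [e, hj] at hi0; exact Option.some_ne_none a hi0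
  have hCij : (i0.val + 1) % k = j.val ∨ (j.val + 1) % k = i0.val := by
    by_contra hC
    have hanti := (hcond i0 j).2 hij hC
    rw [hi0, hj] at hanti
    exact (Sc_anti_none hanti).1.1 rfl
  have step : ∀ m : Fin k, m ≠ i0 → j ≠ m →
      ((j.val + 1) % k = m.val ∨ (m.val + 1) % k = j.val) →
      ¬ ((i0.val + 1) % k = m.val ∨ (m.val + 1) % k = i0.val) → False := by
    intro m hmi hjm hCm hnC
    have hval : h m ≠ none := fun e => hmi (hinj (e.trans hi0.symm))
    obtain ⟨x, hx⟩ := Option.ne_none_iff_exists'.mp hval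
    have hxa : x ≠ a := by
      intro e; rw [e] at hx; exact hjm (hinj (hj.trans hx.symm))
    have hadj := (hcond j m).1 hCm
    rw [hj, hx] at hadj
    have hθx := Sc_adj_some_a hmono hab hxa hadj
    have hanti := (hcond i0 m).2 (fun e => hmi e.symm) hnC
    rw [hi0, hx] at hanti
    have h2 := Sc_anti_none hanti
    rcases h2.1.2 with e | e <;> omega
  rcases hCij with hcA | hcB
  · obtain ⟨m, hm'⟩ : ∃ m : Fin k, (j.val + 1) % k = m.val :=
      ⟨⟨(j.val + 1) % k, Nat.mod_lt _ hk0⟩, rfl⟩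
    have mA : i0.val + 1 ≡ j.val [MOD k] := modeq_of_modk j.isLt hcA
    have mm : j.val + 1 ≡ m.val [MOD k] := modeq_of_modk m.isLt hm'
    have hjm : j ≠ m := by
      intro e; rw [← e] at mm
      exact modeq_self_absurd (by omega) (by omega) mm
    have hmi0 : m ≠ i0 := by
      intro e; rw [e] at mm
      have h1 := (mA.add_right 1).trans mm
      have e2 : i0.val + 1 + 1 = i0.val + 2 := by omega
      rw [e2] at h1
      exact modeq_self_absurd (by omega) (by omega) h1
    apply step m hmi0 hjm (Or.inl hm')
    rintro (hcc | hcc)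
    · have h1 := modeq_of_modk m.isLt hcc
      exact hjm (Fin.ext (modeq_eqv j.isLt m.isLt (mA.symm.trans h1)))
    · have h1 := modeq_of_modk i0.isLt hcc
      have h2 := ((((mA.add_right 1).trans mm).add_right 1).trans h1)
      have e2 : i0.val + 1 + 1 + 1 = i0.val + 3 := by omega
      rw [e2] at h2
      exact modeq_self_absurd (by omega) (by omega) h2
  · obtain ⟨m, hm'⟩ : ∃ m : Fin k, (j.val + (k - 1)) % k = m.val :=
      ⟨⟨(j.val + (k - 1)) % k, Nat.mod_lt _ hk0⟩, rfl⟩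
    have hm : (m.val + 1) % k = j.val := by
      rw [← hm', Nat.mod_add_mod]
      have e : j.val + (k - 1) + 1 = j.val + k := by omega
      rw [e, Nat.add_mod_right, Nat.mod_eq_of_lt j.isLt]
    have mB : j.val + 1 ≡ i0.val [MOD k] := modeq_of_modk i0.isLt hcB
    have mm : m.val + 1 ≡ j.val [MOD k] := modeq_of_modk j.isLt hm
    have hjm : j ≠ m := by
      intro e; rw [← e] at mm
      exact modeq_self_absurd (by omega) (by omega) mm
    have hmi0 : m ≠ i0 := by
      intro e; rw [e] at mm
      have h1 := (mm.add_right 1).trans mB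
      have e2 : i0.val + 1 + 1 = i0.val + 2 := by omega
      rw [e2] at h1
      exact modeq_self_absurd (by omega) (by omega) h1
    apply step m hmi0 hjm (Or.inr hm)
    rintro (hcc | hcc)
    · have h1 := modeq_of_modk m.isLt hcc
      have h2 := (((h1.add_right 1).trans mm).add_right 1).trans mB
      have e2 : i0.val + 1 + 1 + 1 = i0.val + 3 := by omega
      rw [e2] at h2
      exact modeq_self_absurd (by omega) (by omega) h2
    · have h1 := modeq_of_modk i0.isLt hcc
      exact hij (Fin.ext (modeq_eqv i0.isLt j.isLt (h1.symm.trans mm)))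

lemma Kc_no_mixed (hmono : T.Monogamous) (hab : T.Switch a b)
    {k : ℕ} (hodd : Odd k) {h : Fin k → Option V}
    (hh : (T.expandK a b).compl.IsHole k h)
    {i0 j : Fin k} (hi0 : h i0 = none) (hj : h j = some a) : False := by
  have hk4 := hh.1
  have hinj := hh.2.1
  have hcond := hh.2.2
  have hk5 : 5 ≤ k := by obtain ⟨m, hm⟩ := hodd; omega
  have hk0 : 0 < k := by omega
  have hij : i0 ≠ j := by intro e; rw [e, hj] at hi0; exact Option.some_ne_none a hi0
  have hnC : ¬ ((i0.val + 1) % k = j.val ∨ (j.val + 1) % k = i0.val) := by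
    intro hC
    have hadj := (hcond i0 j).1 hC
    rw [hi0, hj] at hadj
    exact Kc_adj_none hadj (Or.inr rfl)
  obtain ⟨m1, hm1'⟩ : ∃ m : Fin k, (j.val + 1) % k = m.val :=
    ⟨⟨(j.val + 1) % k, Nat.mod_lt _ hk0⟩, rfl⟩
  obtain ⟨m2, hm2'⟩ : ∃ m : Fin k, (j.val + (k - 1)) % k = m.val :=
    ⟨⟨(j.val + (k - 1)) % k, Nat.mod_lt _ hk0⟩, rfl⟩
  have hm2 : (m2.val + 1) % k = j.val := by
    rw [← hm2', Nat.mod_add_mod]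
    have e : j.val + (k - 1) + 1 = j.val + k := by omega
    rw [e, Nat.add_mod_right, Nat.mod_eq_of_lt j.isLt]
  have mm1 : j.val + 1 ≡ m1.val [MOD k] := modeq_of_modk m1.isLt hm1'
  have mm2 : m2.val + 1 ≡ j.val [MOD k] := modeq_of_modk j.isLt hm2
  have mm2' : j.val + (k - 1) ≡ m2.val [MOD k] := modeq_of_modk m2.isLt hm2'
  have step : ∀ m : Fin k, j ≠ m → m ≠ i0 →
      ((j.val + 1) % k = m.val ∨ (m.val + 1) % k = j.val) →
      (i0.val + 1) % k = m.val ∨ (m.val + 1) % k = i0.val := by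
    intro m hjm hmi hCm
    by_contra hnCm
    have hval : h m ≠ none := fun e => hmi (hinj (e.trans hi0.symm))
    obtain ⟨x, hx⟩ := Option.ne_none_iff_exists'.mp hval
    have hxa : x ≠ a := by
      intro e; rw [e] at hx; exact hjm (hinj (hj.trans hx.symm))
    have hadj := (hcond j m).1 hCm
    rw [hj, hx] at hadj
    have hθx := Kc_adj_some_a hmono hab hxa hadj
    have hanti := (hcond i0 m).2 (fun e => hmi e.symm) hnCm
    rw [hi0, hx] at hanti
    have h2 := Kc_anti_none hanti
    rcases h2 with ⟨hax, _⟩ | e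
    · rcases hax.2 with e | e <;> omega
    · exact hxa e
  have hjm1 : j ≠ m1 := by
    intro e; rw [← e] at mm1
    exact modeq_self_absurd (by omega) (by omega) mm1
  have hjm2 : j ≠ m2 := by
    intro e; rw [← e] at mm2
    exact modeq_self_absurd (by omega) (by omega) mm2
  have hm1i : m1 ≠ i0 := by
    intro e; rw [e] at mm1
    refine hnC (Or.inr ?_)
    unfold Nat.ModEq at mm1
    rwa [Nat.mod_eq_of_lt i0.isLt] at mm1
  have hm2i : m2 ≠ i0 := by
    intro e; rw [e] at mm2
    refine hnC (Or.inl ?_)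
    unfold Nat.ModEq at mm2
    rwa [Nat.mod_eq_of_lt j.isLt] at mm2
  have hC1 := step m1 hjm1 hm1i (Or.inl hm1')
  have hC2 := step m2 hjm2 hm2i (Or.inr hm2)
  have mj1 : j.val + 2 ≡ i0.val [MOD k] := by
    rcases hC1 with hcc | hcc
    · exfalso
      have h1 := modeq_of_modk m1.isLt hcc
      have h2 := h1.trans mm1.symm
      exact hij (Fin.ext (modeq_eqv i0.isLt j.isLt (Nat.ModEq.add_right_cancel' 1 h2)))
    · have h1 := modeq_of_modk i0.isLt hcc
      have h2 := (mm1.add_right 1).trans h1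
      have e2 : j.val + 1 + 1 = j.val + 2 := by omega
      rw [e2] at h2
      exact h2
  have mj2 : i0.val + 2 ≡ j.val [MOD k] := by
    rcases hC2 with hcc | hcc
    · have h1 := modeq_of_modk m2.isLt hcc
      have h2 := (h1.trans mm2'.symm).add_right 1
      have e1 : i0.val + 1 + 1 = i0.val + 2 := by omega
      have e2 : j.val + (k - 1) + 1 = j.val + k := by omega
      rw [e1, e2] at h2
      exact h2.trans modeq_addk
    · exfalso
      have h1 := modeq_of_modk i0.isLt hcc
      exact hij (Fin.ext (modeq_eqv i0.isLt j.isLt (h1.symm.trans mm2)))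
  have hfin := (mj2.add_right 2).trans mj1
  have e : i0.val + 2 + 2 = i0.val + 4 := by omega
  rw [e] at hfin
  exact modeq_self_absurd (by omega) (by omega) hfin

lemma expandS_berge (T : Trigraph V) (hmono : T.Monogamous) {a b : V}
    (hab : T.Switch a b) (hB : T.Berge) : (T.expandS a b).Berge := by
  refine ⟨?_, ?_⟩
  · intro hH
    obtain ⟨k, hodd, h, hh⟩ := hH
    by_cases hmix : (∃ i, h i = none) ∧ (∃ j, h j = some a)
    · obtain ⟨⟨i0, hi0⟩, j, hj⟩ := hmix
      exact S_no_mixed hmono hab hodd hh hi0 hj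
    · have hcase : ∀ i j : Fin k, h i = none → h j ≠ some a :=
        fun i j hi hj' => hmix ⟨⟨i, hi⟩, ⟨j, hj'⟩⟩
      refine hB.1 ⟨k, hodd, _, isHole_transfer ?_ ?_ ?_ ?_ hh hcase⟩
      · exact fun u v h' => S_adj_some hab h'
      · exact fun u v h' => S_anti_some h'
      · exact fun w _ h' => (S_adj_none h').1
      · exact fun w hwa h' => anti_helper hab hwa (S_anti_none h')
  · intro hH
    obtain ⟨k, hodd, h, hh⟩ := hH
    by_cases hmix : (∃ i, h i = none) ∧ (∃ j, h j = some a)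
    · obtain ⟨⟨i0, hi0⟩, j, hj⟩ := hmix
      exact Sc_no_mixed hmono hab hh hi0 hj
    · have hcase : ∀ i j : Fin k, h i = none → h j ≠ some a :=
        fun i j hi hj' => hmix ⟨⟨i, hi⟩, ⟨j, hj'⟩⟩
      refine hB.2 ⟨k, hodd, _, isHole_transfer ?_ ?_ ?_ ?_ hh hcase⟩
      · exact fun u v h' => Sc_adj_some h'
      · exact fun u v h' => Sc_anti_some hab h'
      · exact fun w hwa h' => compl_adj_helper hab hwa (Sc_adj_none h')
      · exact fun w _ h' => compl_anti_helper hmono hab (Sc_anti_none h')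

lemma expandK_berge (T : Trigraph V) (hmono : T.Monogamous) {a b : V}
    (hab : T.Switch a b) (hB : T.Berge) : (T.expandK a b).Berge := by
  refine ⟨?_, ?_⟩
  · intro hH
    obtain ⟨k, hodd, h, hh⟩ := hH
    by_cases hmix : (∃ i, h i = none) ∧ (∃ j, h j = some a)
    · obtain ⟨⟨i0, hi0⟩, j, hj⟩ := hmix
      exact K_no_mixed hmono hab hodd hh hi0 hj
    · have hcase : ∀ i j : Fin k, h i = none → h j ≠ some a :=
        fun i j hi hj' => hmix ⟨⟨i, hi⟩, ⟨j, hj'⟩⟩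
      refine hB.1 ⟨k, hodd, _, isHole_transfer ?_ ?_ ?_ ?_ hh hcase⟩
      · exact fun u v h' => K_adj_some hab h'
      · exact fun u v h' => K_anti_some h'
      · exact fun w hwa h' => ((K_adj_none h').resolve_right hwa).1
      · exact fun w hwa h' => anti_helper hab hwa (fun hc => K_anti_none h' (Or.inl hc))
  · intro hH
    obtain ⟨k, hodd, h, hh⟩ := hH
    by_cases hmix : (∃ i, h i = none) ∧ (∃ j, h j = some a)
    · obtain ⟨⟨i0, hi0⟩, j, hj⟩ := hmix
      exact Kc_no_mixed hmono hab hodd hh hi0 hj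
    · have hcase : ∀ i j : Fin k, h i = none → h j ≠ some a :=
        fun i j hi hj' => hmix ⟨⟨i, hi⟩, ⟨j, hj'⟩⟩
      refine hB.2 ⟨k, hodd, _, isHole_transfer ?_ ?_ ?_ ?_ hh hcase⟩
      · exact fun u v h' => Kc_adj_some h'
      · exact fun u v h' => Kc_anti_some hab h'
      · exact fun w hwa h' => compl_adj_helper hab hwa (fun hc => Kc_adj_none h' (Or.inl hc))
      · exact fun w hwa h' => compl_anti_helper hmono hab ((Kc_anti_none h').resolve_right hwa)

end Aux

end Trigraph

/-- If a weighted monogamous trigraph `T` with a switchable pair `ab` is Berge, then the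
trigraphs `T_{a→S}`, `T_{b→S}`, `T_{a→K}` and `T_{b→K}` are Berge. -/
theorem expand_berge {V : Type} [Fintype V] [DecidableEq V] (T : Trigraph V)
    (hmono : T.Monogamous) (wv : V → ℕ) (we : V → V → ℕ) (hw : T.GoodWeights wv we)
    (a b : V) (hab : T.Switch a b) (hB : T.Berge) :
    (T.expandS a b).Berge ∧ (T.expandS b a).Berge ∧
    (T.expandK a b).Berge ∧ (T.expandK b a).Berge := by
  have hab' : T.Switch b a := ⟨hab.1.symm, by rw [T.symm]; exact hab.2⟩
  exact ⟨Trigraph.expandS_berge T hmono hab hB, Trigraph.expandS_berge T hmono hab' hB,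
    Trigraph.expandK_berge T hmono hab hB, Trigraph.expandK_berge T hmono hab' hB⟩
end
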